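/- arXiv:1403.7656 — 7 statements merged into one kernel-verified Lean document; each statement's English description precedes it below -/
import Mathlib

section
/- For every integer n ≥ 1, the coefficient of X^{n-1} in the formal power series 1/((1-X)^{n+2}(1-2X)^n) over ℚ equals n·N_{n+1}; equivalently, this coefficient equals Σ_{k=0}^{n-1} C(3n, n-1-k)·C(n+k-1, k). -/
open PowerSeries Finset

lemma chs (a m : ℕ) : (a + m).choose a = (a + m).choose m := by
  simpa using Nat.choose_symm (Nat.le_add_left m a)

lemma E1 (a : ℕ) :
    (1 - X : ℚ⟦X⟧) ^ (a + 1) * PowerSeries.mk (fun m => ((a + m).choose m : ℚ)) = 1 := by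
  have h := (PowerSeries.invOneSubPow ℚ (a + 1)).inv_val
  rw [PowerSeries.invOneSubPow_inv_eq_one_sub_pow,
      PowerSeries.invOneSubPow_val_succ_eq_mk_add_choose] at h
  have hf : (fun n => ((a + n).choose a : ℚ)) = fun m => ((a + m).choose m : ℚ) := by
    funext m; rw [chs]
  rw [hf] at h
  exact h

lemma E2 (a : ℕ) :
    (1 - 2 * X : ℚ⟦X⟧) ^ (a + 1) *
      PowerSeries.mk (fun m => (2 : ℚ) ^ m * ((a + m).choose m : ℚ)) = 1 := by
  have h := congrArg (PowerSeries.rescale (2 : ℚ)) (E1 a)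
  rw [map_mul, map_pow, map_sub, map_one, PowerSeries.rescale_X] at h
  have hmk : PowerSeries.rescale (2 : ℚ) (PowerSeries.mk (fun m => ((a + m).choose m : ℚ)))
      = PowerSeries.mk (fun m => (2 : ℚ) ^ m * ((a + m).choose m : ℚ)) := by
    ext m
    simp [PowerSeries.coeff_rescale]
  rw [hmk] at h
  exact h

lemma uniq {P U V : ℚ⟦X⟧} (h1 : P * U = 1) (h2 : P * V = 1) : U = V := by
  calc U = U * (P * V) := by rw [h2, mul_one]
  _ = (P * U) * V := by ring
  _ = V := by rw [h1, one_mul]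

/-- Vandermonde-type convolution. -/
lemma qI (a b m : ℕ) :
    ∑ j ∈ range (m + 1), ((a + j).choose j : ℚ) * ((b + (m - j)).choose (m - j) : ℚ)
      = ((a + b + 1 + m).choose m : ℚ) := by
  have hprod : (1 - X : ℚ⟦X⟧) ^ (a + b + 1 + 1) *
      (PowerSeries.mk (fun m => ((a + m).choose m : ℚ)) *
       PowerSeries.mk (fun m => ((b + m).choose m : ℚ))) = 1 := by
    calc (1 - X : ℚ⟦X⟧) ^ (a + b + 1 + 1) *
        (PowerSeries.mk (fun m => ((a + m).choose m : ℚ)) *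
         PowerSeries.mk (fun m => ((b + m).choose m : ℚ)))
        = ((1 - X) ^ (a + 1) * PowerSeries.mk (fun m => ((a + m).choose m : ℚ))) *
          ((1 - X) ^ (b + 1) * PowerSeries.mk (fun m => ((b + m).choose m : ℚ))) := by
          ring
      _ = 1 := by rw [E1 a, E1 b, one_mul]
  have heq := uniq hprod (E1 (a + b + 1))
  have := congrArg (PowerSeries.coeff (R := ℚ) m) heq
  rw [PowerSeries.coeff_mul, Finset.Nat.sum_antidiagonal_eq_sum_range_succ_mk] at this
  simpa using this

/-- `2^k * C(d+k, k)` as a convolution. -/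
lemma qIIn (d k : ℕ) :
    2 ^ k * (d + k).choose k
      = ∑ j ∈ range (k + 1), (d + j).choose j * (d + k).choose (k - j) := by
  have hterm : ∀ j ∈ range (k + 1),
      (d + j).choose j * (d + k).choose (k - j) = (d + k).choose k * k.choose j := by
    intro j hj
    rw [Finset.mem_range] at hj
    have hj' : j ≤ k := by omega
    have hsym : (d + k).choose (k - j) = (d + k).choose (d + j) := by
      rw [show d + j = (d + k) - (k - j) by omega]
      exact (Nat.choose_symm (by omega)).symm
    rw [hsym, ← chs d j]
    have hm := Nat.choose_mul (n := d + k) (Nat.le_add_right d j)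
    rw [Nat.add_sub_cancel_left, Nat.add_sub_cancel_left] at hm
    rw [mul_comm, hm, chs]
  rw [Finset.sum_congr rfl hterm, ← Finset.mul_sum, Nat.sum_range_choose, mul_comm]

lemma qII (d k : ℕ) :
    (2 : ℚ) ^ k * ((d + k).choose k : ℚ)
      = ∑ j ∈ range (k + 1), ((d + j).choose j : ℚ) * ((d + k).choose (k - j) : ℚ) := by
  exact_mod_cast qIIn d k

theorem main (d : ℕ) :
    ∑ k ∈ range (d + 1),
        ((2:ℚ) ^ k * ((d + k).choose k : ℚ)) * (((d + 2 + (d - k)).choose (d - k) : ℚ))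
      = ∑ j ∈ range (d + 1), ((3 * d + 3).choose (d - j) : ℚ) * ((d + j).choose j : ℚ) := by
  have step1 : ∀ k ∈ range (d + 1),
      ((2:ℚ) ^ k * ((d + k).choose k : ℚ)) * (((d + 2 + (d - k)).choose (d - k) : ℚ))
        = ∑ j ∈ range (k + 1), ((d + j).choose j : ℚ) *
            (((d + k).choose (k - j) : ℚ) * ((d + 2 + (d - k)).choose (d - k) : ℚ)) := by
    intro k _
    rw [qII, Finset.sum_mul]
    exact Finset.sum_congr rfl fun j _ => by ring
  rw [Finset.sum_congr rfl step1]
  simp only [Finset.range_eq_Ico]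
  rw [← Finset.sum_Ico_Ico_comm 0 (d + 1)
    (fun j k => ((d + j).choose j : ℚ) *
      (((d + k).choose (k - j) : ℚ) * ((d + 2 + (d - k)).choose (d - k) : ℚ)))]
  refine Finset.sum_congr rfl fun j hj => ?_
  rw [Finset.mem_Ico] at hj
  have hjd : j ≤ d := by omega
  rw [Finset.sum_Ico_eq_sum_range, ← Finset.mul_sum]
  have hinner : ∑ m ∈ range (d + 1 - j),
      ((d + (j + m)).choose (j + m - j) : ℚ) *
        ((d + 2 + (d - (j + m))).choose (d - (j + m)) : ℚ)
      = ((3 * d + 3).choose (d - j) : ℚ) := by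
    have hq := qI (d + j) (d + 2) (d - j)
    rw [show (d + j) + (d + 2) + 1 + (d - j) = 3 * d + 3 by omega] at hq
    rw [show d + 1 - j = (d - j) + 1 by omega]
    rw [← hq]
    refine Finset.sum_congr rfl fun m hm => ?_
    rw [Finset.mem_range] at hm
    rw [show j + m - j = m by omega, show d + (j + m) = d + j + m by omega,
      show d - (j + m) = d - j - m by omega]
  rw [hinner, mul_comm]

/-- `Ncn n` is the number of connected noncrossing graphs on `n` vertices,
given by the Flajolet–Noy formula for `n ≥ 2`, with `Ncn 1 = 1`. -/
noncomputable def Ncn (n : ℕ) : ℚ :=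
  if n = 1 then 1
  else (1 / ((n : ℚ) - 1)) *
    ∑ i ∈ Finset.Icc (n - 1) (2 * n - 3),
      ((3 * n - 3).choose (n + i) : ℚ) * ((i - 1).choose (i + 1 - n) : ℚ)

theorem coeff_inv_eq_n_mul_Ncn (n : ℕ) (hn : 1 ≤ n) :
    (PowerSeries.coeff (R := ℚ) (n - 1))
        (((1 - PowerSeries.X) ^ (n + 2) * (1 - 2 * PowerSeries.X) ^ n)⁻¹)
      = (n : ℚ) * Ncn (n + 1) ∧
    (PowerSeries.coeff (R := ℚ) (n - 1))
        (((1 - PowerSeries.X) ^ (n + 2) * (1 - 2 * PowerSeries.X) ^ n)⁻¹)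
      = ∑ k ∈ Finset.range n,
          ((3 * n).choose (n - 1 - k) : ℚ) * ((n + k - 1).choose k : ℚ) := by
  obtain ⟨d, rfl⟩ : ∃ d, n = d + 1 := ⟨n - 1, by omega⟩
  -- the constant coefficient of F is nonzero
  set F : ℚ⟦X⟧ := (1 - X) ^ (d + 1 + 2) * (1 - 2 * X) ^ (d + 1) with hF
  have hconst : PowerSeries.constantCoeff F ≠ 0 := by
    rw [hF]
    simp [map_mul, map_pow, map_sub, map_one]
  -- identify the inverse
  have key : F⁻¹ = PowerSeries.mk (fun m => (2 : ℚ) ^ m * ((d + m).choose m : ℚ)) *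
      PowerSeries.mk (fun m => ((d + 2 + m).choose m : ℚ)) := by
    rw [PowerSeries.inv_eq_iff_mul_eq_one hconst, hF]
    calc (PowerSeries.mk (fun m => (2 : ℚ) ^ m * ((d + m).choose m : ℚ)) *
          PowerSeries.mk (fun m => ((d + 2 + m).choose m : ℚ))) *
          ((1 - X) ^ (d + 1 + 2) * (1 - 2 * X) ^ (d + 1))
        = ((1 - X) ^ (d + 2 + 1) *
            PowerSeries.mk (fun m => ((d + 2 + m).choose m : ℚ))) *
          ((1 - 2 * X) ^ (d + 1) *
            PowerSeries.mk (fun m => (2 : ℚ) ^ m * ((d + m).choose m : ℚ))) := by ring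
      _ = 1 := by rw [E1 (d + 2), E2 d, one_mul]
  have hcoeff : (PowerSeries.coeff (R := ℚ) (d + 1 - 1)) F⁻¹
      = ∑ k ∈ range (d + 1),
          ((2:ℚ) ^ k * ((d + k).choose k : ℚ)) * (((d + 2 + (d - k)).choose (d - k) : ℚ)) := by
    rw [show d + 1 - 1 = d by omega, key, PowerSeries.coeff_mul,
      Finset.Nat.sum_antidiagonal_eq_sum_range_succ_mk]
    simp [PowerSeries.coeff_mk]
  -- second conjunct
  have h2 : (PowerSeries.coeff (R := ℚ) (d + 1 - 1)) F⁻¹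
      = ∑ k ∈ Finset.range (d + 1),
          ((3 * (d + 1)).choose (d + 1 - 1 - k) : ℚ) * ((d + 1 + k - 1).choose k : ℚ) := by
    rw [hcoeff, main]
    refine Finset.sum_congr rfl fun k _ => ?_
    rw [show 3 * (d + 1) = 3 * d + 3 by ring, show d + 1 - 1 - k = d - k by omega,
      show d + 1 + k - 1 = d + k by omega]
  refine ⟨?_, h2⟩
  rw [h2]
  -- now compute (d+1) * Ncn (d+2)
  rw [Ncn, if_neg (by omega : ¬ d + 1 + 1 = 1)]
  rw [show d + 1 + 1 - 1 = d + 1 by omega, show 2 * (d + 1 + 1) - 3 = 2 * d + 1 by omega,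
    show 3 * (d + 1 + 1) - 3 = 3 * d + 3 by omega]
  rw [show Finset.Icc (d + 1) (2 * d + 1) = Finset.Ico (d + 1) (2 * d + 2) from by
    rw [show 2 * d + 2 = (2 * d + 1) + 1 by omega, Finset.Ico_add_one_right_eq_Icc]]
  rw [Finset.sum_Ico_eq_sum_range, show 2 * d + 2 - (d + 1) = d + 1 by omega]
  have hterm : ∀ k ∈ range (d + 1),
      ((3 * d + 3).choose (d + 1 + 1 + (d + 1 + k)) : ℚ) *
        ((d + 1 + k - 1).choose (d + 1 + k + 1 - (d + 1 + 1)) : ℚ)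
      = ((3 * (d + 1)).choose (d + 1 - 1 - k) : ℚ) * ((d + 1 + k - 1).choose k : ℚ) := by
    intro k hk
    rw [Finset.mem_range] at hk
    rw [show d + 1 + 1 + (d + 1 + k) = (3 * d + 3) - (d - k) by omega]
    rw [Nat.choose_symm (by omega)]
    rw [show d + 1 + k + 1 - (d + 1 + 1) = k by omega,
      show 3 * (d + 1) = 3 * d + 3 by ring, show d + 1 - 1 - k = d - k by omega]
  rw [Finset.sum_congr rfl hterm]
  push_cast
  field_simp
  ring
end

section
/- For every integer n ≥ 1: N_n ≡ 1 (mod 3) if n = 3^m or n = 2·3^m for some integer m ≥ 0; N_n ≡ 2 (mod 3) if n = 3^a + 3^b for some integers a > b ≥ 0; and N_n ≡ 0 (mod 3) in all other cases. -/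
open Finset PowerSeries

noncomputable section NcnAux


/-- One step of the fixpoint iteration for `w = X (1+w)^3 + w^2`. -/
def fnStep (f : PowerSeries ℤ) : PowerSeries ℤ := X * (1 + f) ^ 3 + f ^ 2

/-- Fixpoint iteration. -/
def fnIter : ℕ → PowerSeries ℤ
  | 0 => 0
  | k + 1 => fnStep (fnIter k)

/-- Coefficients of the solution. -/
def cseq (n : ℕ) : ℤ := coeff n (fnIter (n + 1))

/-- The solution power series. -/
def wZ : PowerSeries ℤ := PowerSeries.mk cseq

lemma fnStep_sub (a b : PowerSeries ℤ) :
    fnStep a - fnStep b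
      = (a - b) * (X * ((1:PowerSeries ℤ) + ((1+a)^2 + (1+a)*(1+b) + (1+b)^2) - 1) + (a + b)) := by
  unfold fnStep; ring

lemma constantCoeff_fnIter (k : ℕ) : constantCoeff (fnIter k) = 0 := by
  induction k with
  | zero => simp [fnIter]
  | succ k ih => simp [fnIter, fnStep, ih]

lemma fnIter_sub_dvd (k : ℕ) : (X : PowerSeries ℤ) ^ (k+1) ∣ fnIter (k+1) - fnIter k := by
  induction k with
  | zero =>
    simp [fnIter, fnStep]
  | succ k ih =>
    have h1 : fnIter (k+2) - fnIter (k+1) = fnStep (fnIter (k+1)) - fnStep (fnIter k) := rfl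
    rw [h1, fnStep_sub]
    have hX : (X : PowerSeries ℤ) ∣
        (X * ((1:PowerSeries ℤ) + ((1+fnIter (k+1))^2 + (1+fnIter (k+1))*(1+fnIter k) + (1+fnIter k)^2) - 1)
          + (fnIter (k+1) + fnIter k)) := by
      rw [PowerSeries.X_dvd_iff]
      simp [constantCoeff_fnIter]
    calc (X : PowerSeries ℤ) ^ (k+2) = X^(k+1) * X := by ring
    _ ∣ _ := mul_dvd_mul ih hX

lemma coeff_fnIter_stable {n k : ℕ} (h : n ≤ k) : coeff n (fnIter (k+1)) = coeff n (fnIter k) := by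
  have := fnIter_sub_dvd k
  rw [PowerSeries.X_pow_dvd_iff] at this
  have h2 := this n (by omega)
  rw [map_sub] at h2
  linarith

lemma coeff_fnIter {n k : ℕ} (h : n < k) : coeff n (fnIter k) = cseq n := by
  induction k with
  | zero => omega
  | succ k ih =>
    rcases Nat.lt_or_ge n k with h' | h'
    · rw [coeff_fnIter_stable (by omega), ih h']
    · have : n = k := by omega
      subst this; rfl

lemma X_pow_dvd_wZ_sub (k : ℕ) : (X : PowerSeries ℤ) ^ k ∣ wZ - fnIter k := by
  rw [PowerSeries.X_pow_dvd_iff]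
  intro m hm
  rw [map_sub, coeff_fnIter hm]
  simp [wZ]

lemma cseq_zero : cseq 0 = 0 := by
  unfold cseq
  rw [coeff_zero_eq_constantCoeff]
  exact constantCoeff_fnIter 1

lemma constantCoeff_wZ : constantCoeff wZ = 0 := by
  rw [← coeff_zero_eq_constantCoeff_apply, wZ, PowerSeries.coeff_mk, cseq_zero]

/-- The functional equation. -/
theorem wZ_eq : wZ = X * (1 + wZ) ^ 3 + wZ ^ 2 := by
  have key : ∀ k : ℕ, (X : PowerSeries ℤ)^(k+1) ∣ wZ - fnStep wZ := by
    intro k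
    have h1 : wZ - fnStep wZ = (wZ - fnIter (k+1)) + (fnStep (fnIter k) - fnStep wZ) := by
      have : fnIter (k+1) = fnStep (fnIter k) := rfl
      rw [this]; ring
    rw [h1]
    apply dvd_add
    · exact X_pow_dvd_wZ_sub (k+1)
    · rw [fnStep_sub]
      have hX : (X : PowerSeries ℤ) ∣
          (X * ((1:PowerSeries ℤ) + ((1+fnIter k)^2 + (1+fnIter k)*(1+wZ) + (1+wZ)^2) - 1)
            + (fnIter k + wZ)) := by
        rw [PowerSeries.X_dvd_iff]
        simp [constantCoeff_fnIter, constantCoeff_wZ]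
      have h2 : (X : PowerSeries ℤ)^k ∣ fnIter k - wZ := by
        have := dvd_neg.mpr (X_pow_dvd_wZ_sub k)
        rwa [neg_sub] at this
      calc (X : PowerSeries ℤ)^(k+1) = X^k * X := by ring
      _ ∣ _ := mul_dvd_mul h2 hX
  have : wZ - fnStep wZ = 0 := by
    ext n
    have := key n
    rw [PowerSeries.X_pow_dvd_iff] at this
    simpa using this n (by omega)
  have h := sub_eq_zero.mp this
  rw [fnStep] at h
  exact h


/-! ### Arithmetic lemmas about powers of 3 -/

lemma three_pow_ne_two_mul (a m : ℕ) : 3 ^ a ≠ 2 * 3 ^ m := by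
  induction a generalizing m with
  | zero =>
    have := Nat.one_le_two_pow (n := m)
    have h1 : 1 ≤ 3 ^ m := Nat.one_le_pow _ _ (by norm_num)
    intro h; omega
  | succ a ih =>
    intro h
    match m with
    | 0 =>
      have h1 : 3 ∣ 3 ^ (a+1) := dvd_pow_self 3 (by omega)
      omega
    | m + 1 =>
      rw [pow_succ, pow_succ] at h
      exact ih m (by omega)

lemma three_pow_add_ne (a b m : ℕ) : 3 ^ a + 3 ^ b ≠ 3 ^ m := by
  induction a generalizing b m with
  | zero =>
    intro h
    match b, m with
    | 0, m =>
      simp only [pow_zero] at h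
      match m with
      | 0 => simp at h
      | m+1 => have : 3 ∣ 3^(m+1) := dvd_pow_self 3 (by omega); omega
    | b+1, 0 =>
      have h1 : 1 ≤ 3 ^ (b+1) := Nat.one_le_pow _ _ (by norm_num)
      simp only [pow_zero] at h; omega
    | b+1, m+1 =>
      have h1 : 3 ∣ 3^(b+1) := dvd_pow_self 3 (by omega)
      have h2 : 3 ∣ 3^(m+1) := dvd_pow_self 3 (by omega)
      omega
  | succ a ih =>
    intro h
    match b, m with
    | 0, m =>
      have h1 : 3 ∣ 3^(a+1) := dvd_pow_self 3 (by omega)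
      match m with
      | 0 => have h2 : 1 ≤ 3^(a+1) := Nat.one_le_pow _ _ (by norm_num); omega
      | m+1 => have h2 : 3 ∣ 3^(m+1) := dvd_pow_self 3 (by omega); omega
    | b+1, 0 =>
      have h1 : 1 ≤ 3^(a+1) := Nat.one_le_pow _ _ (by norm_num)
      have h2 : 1 ≤ 3^(b+1) := Nat.one_le_pow _ _ (by norm_num)
      omega
    | b+1, m+1 =>
      rw [pow_succ, pow_succ, pow_succ] at h
      exact ih b m (by omega)

lemma three_pow_add_ne_two_mul' : ∀ a b m : ℕ, a ≠ b → 3 ^ a + 3 ^ b ≠ 2 * 3 ^ m := by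
  intro a
  induction a with
  | zero =>
    intro b m hab h
    match b, m with
    | 0, _ => exact hab rfl
    | b+1, 0 =>
      have h1 : 1 ≤ 3^(b+1) := Nat.one_le_pow _ _ (by norm_num)
      have h2 : 3 ∣ 3^(b+1) := dvd_pow_self 3 (by omega)
      omega
    | b+1, m+1 =>
      have h1 : 3 ∣ 3^(b+1) := dvd_pow_self 3 (by omega)
      have h2 : 3 ∣ 3^(m+1) := dvd_pow_self 3 (by omega)
      omega
  | succ a ih =>
    intro b m hab h
    match b, m with
    | 0, 0 =>
      have h1 : 3 ∣ 3^(a+1) := dvd_pow_self 3 (by omega)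
      omega
    | 0, m+1 =>
      have h1 : 3 ∣ 3^(a+1) := dvd_pow_self 3 (by omega)
      have h2 : 3 ∣ 3^(m+1) := dvd_pow_self 3 (by omega)
      omega
    | b+1, 0 =>
      have h1 : 3 ∣ 3^(a+1) := dvd_pow_self 3 (by omega)
      have h2 : 3 ∣ 3^(b+1) := dvd_pow_self 3 (by omega)
      omega
    | b+1, m+1 =>
      rw [pow_succ, pow_succ, pow_succ] at h
      exact ih b m (by omega) (by omega)

lemma three_pow_injective : Function.Injective (fun m : ℕ => 3 ^ m) :=
  fun _ _ h => Nat.pow_right_injective (by norm_num) h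

lemma three_pow_add_inj : ∀ b a d c : ℕ, b ≤ a → d ≤ c → 3 ^ a + 3 ^ b = 3 ^ c + 3 ^ d →
    a = c ∧ b = d := by
  intro b
  induction b with
  | zero =>
    intro a d c _ hdc h
    match d with
    | 0 =>
      simp only [pow_zero] at h
      exact ⟨Nat.pow_right_injective (by norm_num) (show 3^a = 3^c by omega), rfl⟩
    | d+1 =>
      have h1 : 3 ∣ 3^(d+1) := dvd_pow_self 3 (by omega)
      have h2 : 3 ∣ 3^c := dvd_pow_self 3 (by omega)
      match a with
      | 0 => omega
      | a+1 =>
        have h3 : 3 ∣ 3^(a+1) := dvd_pow_self 3 (by omega)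
        omega
  | succ b ih =>
    intro a d c hba hdc h
    match a with
    | 0 => omega
    | a+1 =>
      have h1 : 3 ∣ 3^(a+1) := dvd_pow_self 3 (by omega)
      have h2 : 3 ∣ 3^(b+1) := dvd_pow_self 3 (by omega)
      match d with
      | 0 =>
        match c with
        | 0 => omega
        | c+1 =>
          have h3 : 3 ∣ 3^(c+1) := dvd_pow_self 3 (by omega)
          omega
      | d+1 =>
        match c with
        | 0 => omega
        | c+1 =>
          rw [pow_succ, pow_succ, pow_succ, pow_succ] at h
          have := ih a d c (by omega) (by omega) (by omega)
          omega

lemma three_pow_add_ne_two_mul {a b m : ℕ} (hab : a ≠ b) : 3 ^ a + 3 ^ b ≠ 2 * 3 ^ m :=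
  three_pow_add_ne_two_mul' a b m hab


abbrev S3 := PowerSeries (ZMod 3)

open Classical in
def gfun (n : ℕ) : ZMod 3 := if ∃ m, n = 3 ^ m then 1 else 0

def Gps : S3 := PowerSeries.mk gfun

lemma gfun_pow (m : ℕ) : gfun (3 ^ m) = 1 := by rw [gfun, if_pos ⟨m, rfl⟩]

lemma gfun_eq_zero {n : ℕ} (h : ¬ ∃ m, n = 3 ^ m) : gfun n = 0 := by rw [gfun, if_neg h]

lemma gfun_ne_zero {n : ℕ} (h : gfun n ≠ 0) : ∃ m, n = 3 ^ m := by
  by_contra hc; exact h (gfun_eq_zero hc)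

/-- Cubing in `(ZMod 3)⟦X⟧` is coefficientwise dilation by 3. -/
lemma coeff_cube (f : S3) (n : ℕ) :
    coeff n (f ^ 3) = if 3 ∣ n then coeff (n / 3) f else 0 := by
  set T : Polynomial (ZMod 3) := trunc (n + 1) f with hT
  have hdvd : (X : S3) ^ (n + 1) ∣ f - (T : S3) := by
    rw [PowerSeries.X_pow_dvd_iff]
    intro m hm
    rw [map_sub, Polynomial.coeff_coe, hT, coeff_trunc, if_pos hm, sub_self]
  have hfT : f ^ 3 - (T : S3) ^ 3 = (f - T) * (f ^ 2 + f * T + T ^ 2) := by ring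
  have hco : coeff n (f ^ 3) = coeff n ((T : S3) ^ 3) := by
    have hd : (X : S3) ^ (n + 1) ∣ f ^ 3 - (T : S3) ^ 3 := hfT ▸ hdvd.mul_right _
    rw [PowerSeries.X_pow_dvd_iff] at hd
    have h2 := hd n (by omega)
    rw [map_sub] at h2
    exact sub_eq_zero.mp h2
  have hT3 : T ^ 3 = Polynomial.expand (ZMod 3) 3 T := by
    have h := Polynomial.map_frobenius_expand 3 T
    rw [ZMod.frobenius_zmod, Polynomial.map_id] at h
    exact h.symm
  rw [hco, ← Polynomial.coe_pow, Polynomial.coeff_coe, hT3,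
    Polynomial.coeff_expand (by norm_num : 0 < 3)]
  split_ifs with h
  · rw [hT, coeff_trunc, if_pos (by omega)]
  · rfl

lemma G_cubed : Gps ^ 3 = Gps - X := by
  ext n
  rw [coeff_cube, map_sub, PowerSeries.coeff_X]
  simp only [Gps, PowerSeries.coeff_mk]
  split_ifs with h3 h1 h1
  · -- 3 ∣ n and n = 1 : impossible
    omega
  · -- 3 ∣ n
    rw [sub_zero]
    by_cases hg : ∃ m, n / 3 = 3 ^ m
    · obtain ⟨m, hm⟩ := hg
      have hn : n = 3 ^ (m + 1) := by
        have := Nat.div_mul_cancel h3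
        rw [pow_succ]
        omega
      rw [hm, gfun_pow, hn, gfun_pow]
    · rw [gfun_eq_zero hg, gfun_eq_zero]
      rintro ⟨m, hm⟩
      match m with
      | 0 => omega
      | m + 1 =>
        apply hg
        exact ⟨m, by rw [hm, pow_succ]; omega⟩
  · -- ¬ 3 ∣ n, n = 1
    subst h1
    rw [show gfun 1 = 1 from gfun_pow 0]; norm_num
  · -- ¬ 3 ∣ n, n ≠ 1
    rw [sub_zero, eq_comm, gfun_eq_zero]
    rintro ⟨m, hm⟩
    match m with
    | 0 => omega
    | m + 1 =>
      apply h3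
      rw [hm, pow_succ]
      omega

open Classical in
/-- The coefficients of `G²`. -/
lemma coeff_G_sq (n : ℕ) :
    coeff n (Gps * Gps) =
      if ∃ m, n = 2 * 3 ^ m then 1
      else if ∃ a b, b < a ∧ n = 3 ^ a + 3 ^ b then 2 else 0 := by
  rw [PowerSeries.coeff_mul]
  simp only [Gps, PowerSeries.coeff_mk]
  split_ifs with hA hB
  · obtain ⟨m, rfl⟩ := hA
    rw [Finset.sum_eq_single_of_mem (⟨3 ^ m, 3 ^ m⟩ : ℕ × ℕ)]
    · rw [gfun_pow]; norm_num
    · rw [Finset.HasAntidiagonal.mem_antidiagonal]; ring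
    · rintro ⟨p, q⟩ hmem hne
      rw [Finset.HasAntidiagonal.mem_antidiagonal] at hmem
      by_contra hzero
      have hp : gfun p ≠ 0 := fun h => hzero (by simp [h])
      have hq : gfun q ≠ 0 := fun h => hzero (by simp [h])
      obtain ⟨a, rfl⟩ := gfun_ne_zero hp
      obtain ⟨b, rfl⟩ := gfun_ne_zero hq
      have hab : a = b := by
        by_contra hne'
        exact three_pow_add_ne_two_mul hne' hmem
      subst hab
      have : a = m := Nat.pow_right_injective (show 2 ≤ 3 by norm_num)
        (show (3:ℕ) ^ a = 3 ^ m by omega)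
      subst this
      exact hne rfl
  · obtain ⟨a, b, hba, rfl⟩ := hB
    have hne : (⟨3 ^ a, 3 ^ b⟩ : ℕ × ℕ) ≠ ⟨3 ^ b, 3 ^ a⟩ := by
      have := Nat.pow_lt_pow_right (by norm_num : 1 < 3) hba
      intro hcon
      rw [Prod.mk.injEq] at hcon
      omega
    have hsub : ({⟨3 ^ a, 3 ^ b⟩, ⟨3 ^ b, 3 ^ a⟩} : Finset (ℕ × ℕ)) ⊆
        Finset.HasAntidiagonal.antidiagonal (3 ^ a + 3 ^ b) := by
      intro p hp
      rw [Finset.mem_insert, Finset.mem_singleton] at hp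
      rw [Finset.HasAntidiagonal.mem_antidiagonal]
      rcases hp with rfl | rfl
      · rfl
      · exact add_comm _ _
    rw [← Finset.sum_subset hsub]
    · rw [Finset.sum_pair hne, gfun_pow, gfun_pow]
      norm_num
    · rintro ⟨p, q⟩ hmem hnotin
      rw [Finset.HasAntidiagonal.mem_antidiagonal] at hmem
      by_contra hzero
      have hp : gfun p ≠ 0 := fun h => hzero (by simp [h])
      have hq : gfun q ≠ 0 := fun h => hzero (by simp [h])
      obtain ⟨c, rfl⟩ := gfun_ne_zero hp
      obtain ⟨d, rfl⟩ := gfun_ne_zero hq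
      apply hnotin
      rw [Finset.mem_insert, Finset.mem_singleton]
      rcases Nat.le_total d c with hdc | hcd
      · obtain ⟨rfl, rfl⟩ := three_pow_add_inj d c b a hdc (le_of_lt hba) hmem
        left; rfl
      · obtain ⟨rfl, rfl⟩ := three_pow_add_inj c d b a hcd (le_of_lt hba) (by omega)
        right; rfl
  · apply Finset.sum_eq_zero
    rintro ⟨p, q⟩ hmem
    rw [Finset.HasAntidiagonal.mem_antidiagonal] at hmem
    by_contra hzero
    have hp : gfun p ≠ 0 := fun h => hzero (by simp [h])
    have hq : gfun q ≠ 0 := fun h => hzero (by simp [h])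
    obtain ⟨c, rfl⟩ := gfun_ne_zero hp
    obtain ⟨d, rfl⟩ := gfun_ne_zero hq
    rcases Nat.lt_trichotomy c d with h | h | h
    · exact hB ⟨d, c, h, by omega⟩
    · subst h
      exact hA ⟨c, by omega⟩
    · exact hB ⟨c, d, h, by omega⟩

/-! ### The mod-3 identification -/

def Hps : S3 := Gps + Gps * Gps

lemma three_eq_zero_S3 : (3 : S3) = 0 := by
  rw [← map_ofNat (PowerSeries.C (R := ZMod 3)) 3, show (3 : ZMod 3) = 0 by decide, map_zero]

lemma Hps_cubic : Hps ^ 3 + Hps ^ 2 + 2 * X ^ 2 = 0 := by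
  have hc := G_cubed
  have h3 := three_eq_zero_S3
  unfold Hps
  linear_combination (Gps^3 + 3*Gps^2 + 5*Gps + 6 - X) * hc
    + ((2 - X)*Gps^2 + (2 - 2*X)*Gps + X^2 - 2*X) * h3

def wR (R : Type*) [CommRing R] : PowerSeries R := PowerSeries.map (Int.castRingHom R) wZ

lemma wR_eq (R : Type*) [CommRing R] : wR R = X * (1 + wR R) ^ 3 + (wR R) ^ 2 := by
  have h := congrArg (PowerSeries.map (Int.castRingHom R)) wZ_eq
  rw [map_add, map_mul, map_pow, map_pow, map_add, map_one, PowerSeries.map_X] at h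
  exact h

lemma coeff_wR (R : Type*) [CommRing R] (n : ℕ) :
    coeff n (wR R) = ((cseq n : ℤ) : R) := by
  simp [wR, PowerSeries.coeff_map, wZ]

def F3 : S3 := X * (1 + wR (ZMod 3))

lemma F3_cubic : F3 ^ 3 + F3 ^ 2 + 2 * X ^ 2 = 0 := by
  have hw := wR_eq (ZMod 3)
  have h3 := three_eq_zero_S3
  unfold F3
  linear_combination (-(X^2)) * hw + (X^2 * (wR (ZMod 3) + 1)) * h3

lemma constantCoeff_Hps : constantCoeff Hps = 0 := by
  rw [← coeff_zero_eq_constantCoeff_apply, Hps, map_add, coeff_G_sq]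
  have h1 : ¬ ∃ m : ℕ, (0:ℕ) = 2 * 3 ^ m := by
    rintro ⟨m, hm⟩
    have : 1 ≤ 3 ^ m := Nat.one_le_pow _ _ (by norm_num)
    omega
  have h2 : ¬ ∃ a b : ℕ, b < a ∧ (0:ℕ) = 3 ^ a + 3 ^ b := by
    rintro ⟨a, b, _, hm⟩
    have ha : 1 ≤ 3 ^ a := Nat.one_le_pow _ _ (by norm_num)
    have hb : 1 ≤ 3 ^ b := Nat.one_le_pow _ _ (by norm_num)
    omega
  rw [if_neg h1, if_neg h2, Gps, PowerSeries.coeff_mk, gfun_eq_zero]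
  · norm_num
  · rintro ⟨m, hm⟩
    have : 1 ≤ 3 ^ m := Nat.one_le_pow _ _ (by norm_num)
    omega

lemma coeff_one_Hps : coeff 1 Hps = 1 := by
  rw [Hps, map_add, coeff_G_sq]
  have h1 : ¬ ∃ m : ℕ, (1:ℕ) = 2 * 3 ^ m := by
    rintro ⟨m, hm⟩
    have : 1 ≤ 3 ^ m := Nat.one_le_pow _ _ (by norm_num)
    omega
  have h2 : ¬ ∃ a b : ℕ, b < a ∧ (1:ℕ) = 3 ^ a + 3 ^ b := by
    rintro ⟨a, b, _, hm⟩
    have ha : 1 ≤ 3 ^ a := Nat.one_le_pow _ _ (by norm_num)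
    have hb : 1 ≤ 3 ^ b := Nat.one_le_pow _ _ (by norm_num)
    omega
  rw [if_neg h1, if_neg h2, Gps, PowerSeries.coeff_mk,
    show gfun 1 = 1 from gfun_pow 0]
  norm_num

lemma F3_eq_Hps : F3 = Hps := by
  have hdiff : (F3 - Hps) * (F3^2 + F3*Hps + Hps^2 + F3 + Hps) = 0 := by
    linear_combination F3_cubic - Hps_cubic
  rcases mul_eq_zero.mp hdiff with h | h
  · exact sub_eq_zero.mp h
  · exfalso
    have hXF : (X : S3) ∣ F3 := Dvd.intro _ rfl
    have hXH : (X : S3) ∣ Hps := by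
      rw [PowerSeries.X_dvd_iff]; exact constantCoeff_Hps
    have hsq : ∀ f g : S3, (X:S3) ∣ f → (X:S3) ∣ g → coeff 1 (f * g) = 0 := by
      intro f g hf hg
      have : (X:S3)^2 ∣ f * g := by
        have := mul_dvd_mul hf hg
        simpa [sq] using this
      rw [PowerSeries.X_pow_dvd_iff] at this
      exact this 1 (by omega)
    have h1 := congrArg (coeff 1) h
    rw [map_zero, map_add, map_add, map_add, map_add] at h1
    rw [show F3^2 = F3*F3 by ring, show Hps^2 = Hps*Hps by ring] at h1
    rw [hsq _ _ hXF hXF, hsq _ _ hXF hXH, hsq _ _ hXH hXH] at h1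
    have hF1 : coeff 1 F3 = 1 := by
      rw [F3, PowerSeries.coeff_succ_X_mul, map_add, coeff_wR]
      simp [cseq_zero]
    rw [hF1, coeff_one_Hps] at h1
    revert h1
    decide

theorem cseq_mod3 (n : ℕ) (hn : 2 ≤ n) :
    ((cseq (n-1) : ℤ) : ZMod 3) = gfun n + coeff n (Gps * Gps) := by
  have h := congrArg (coeff n) F3_eq_Hps
  obtain ⟨m, rfl⟩ : ∃ m, n = m + 1 := ⟨n-1, by omega⟩
  rw [F3, PowerSeries.coeff_succ_X_mul, map_add, coeff_wR] at h
  rw [Hps, map_add] at h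
  have h1 : coeff m (1 : S3) = 0 := by
    rw [PowerSeries.coeff_one, if_neg (by omega)]
  rw [h1, zero_add] at h
  simpa [Gps] using h

lemma cseq_val_case1 {n : ℕ} (hn : 2 ≤ n) (h : ∃ m, n = 3 ^ m ∨ n = 2 * 3 ^ m) :
    ((cseq (n-1) : ℤ) : ZMod 3) = 1 := by
  rw [cseq_mod3 n hn, coeff_G_sq]
  obtain ⟨m, h | h⟩ := h <;> subst h
  · rw [gfun_pow, if_neg, if_neg]
    · norm_num
    · rintro ⟨a, b, hba, hab⟩
      exact three_pow_add_ne a b m hab.symm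
    · rintro ⟨k, hk⟩
      exact three_pow_ne_two_mul m k hk
  · rw [if_pos ⟨m, rfl⟩, gfun_eq_zero]
    · norm_num
    · rintro ⟨k, hk⟩
      exact three_pow_ne_two_mul k m hk.symm

lemma cseq_val_case2 {n : ℕ} (hn : 2 ≤ n) (h : ∃ a b : ℕ, b < a ∧ n = 3 ^ a + 3 ^ b) :
    ((cseq (n-1) : ℤ) : ZMod 3) = 2 := by
  obtain ⟨a, b, hba, rfl⟩ := h
  rw [cseq_mod3 _ hn, coeff_G_sq, if_neg, if_pos ⟨a, b, hba, rfl⟩, gfun_eq_zero]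
  · norm_num
  · rintro ⟨k, hk⟩
    exact three_pow_add_ne a b k hk
  · rintro ⟨k, hk⟩
    exact three_pow_add_ne_two_mul (show a ≠ b by omega) hk

lemma cseq_val_case0 {n : ℕ} (hn : 2 ≤ n) (h1 : ¬ ∃ m : ℕ, n = 3 ^ m ∨ n = 2 * 3 ^ m)
    (h2 : ¬ ∃ a b : ℕ, b < a ∧ n = 3 ^ a + 3 ^ b) :
    ((cseq (n-1) : ℤ) : ZMod 3) = 0 := by
  rw [cseq_mod3 n hn, coeff_G_sq, if_neg, if_neg h2, gfun_eq_zero]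
  · norm_num
  · rintro ⟨m, hm⟩
    exact h1 ⟨m, Or.inl hm⟩
  · rintro ⟨m, hm⟩
    exact h1 ⟨m, Or.inr hm⟩

/-! ### Lagrange inversion over ℚ -/

abbrev SQ := PowerSeries ℚ

def wq : SQ := wR ℚ
def Uval : SQ := ((invOneSubPow ℚ 1 : SQˣ) : SQ)
def phi : SQ := (1 + X) ^ 3 * Uval
def Vw : SQ := PowerSeries.invOfUnit (1 - wq) 1

lemma one_sub_X_mul_Uval : (1 - X : SQ) * Uval = 1 := by
  have h := (invOneSubPow ℚ 1).inv_val
  rwa [invOneSubPow_inv_eq_one_sub_pow, pow_one] at h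

lemma constantCoeff_wq : constantCoeff wq = 0 := by
  rw [wq, ← coeff_zero_eq_constantCoeff_apply, coeff_wR, cseq_zero]
  norm_num

lemma one_sub_wq_mul_Vw : (1 - wq) * Vw = 1 :=
  PowerSeries.mul_invOfUnit _ _ (by rw [map_sub, map_one, constantCoeff_wq, sub_zero, Units.val_one])

lemma X_dvd_wq : (X : SQ) ∣ wq := PowerSeries.X_dvd_iff.mpr constantCoeff_wq

lemma wq_eq_X_mul : wq = X * ((1 + wq) ^ 3 * Vw) := by
  have h := wR_eq ℚ
  have h2 : wq - wq ^ 2 = X * (1 + wq) ^ 3 := by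
    rw [wq]; linear_combination h
  calc wq = wq * ((1 - wq) * Vw) := by rw [one_sub_wq_mul_Vw, mul_one]
  _ = (wq - wq ^ 2) * Vw := by ring
  _ = (X * (1 + wq) ^ 3) * Vw := by rw [h2]
  _ = X * ((1 + wq) ^ 3 * Vw) := by ring

lemma phi_pow_eq (j : ℕ) : phi ^ j = (1 + X) ^ (3 * j) * Uval ^ j := by
  rw [phi, mul_pow, pow_mul]

lemma one_sub_pow_mul_phi_pow (j : ℕ) : (1 - X : SQ) ^ j * phi ^ j = (1 + X) ^ (3 * j) := by
  rw [phi_pow_eq]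
  calc (1 - X : SQ) ^ j * ((1 + X) ^ (3 * j) * Uval ^ j)
      = (1 + X) ^ (3 * j) * ((1 - X) * Uval) ^ j := by rw [mul_pow]; ring
  _ = (1 + X) ^ (3 * j) := by rw [one_sub_X_mul_Uval, one_pow, mul_one]

lemma constantCoeff_Uval : constantCoeff Uval = 1 := by
  simpa using congrArg (constantCoeff) one_sub_X_mul_Uval

lemma constantCoeff_phi_pow (k : ℕ) : constantCoeff (phi ^ k) = 1 := by
  simp [phi, constantCoeff_Uval]

/-- The expansion lemma: low coefficients of `φ(w)^j` come from the truncation of `φ^j`. -/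
lemma expansion (j N : ℕ) :
    coeff N ((1 + wq) ^ (3 * j) * Vw ^ j) =
      ∑ m ∈ Finset.range (N + 1), coeff m (phi ^ j) * coeff N (wq ^ m) := by
  set P : Polynomial ℚ := trunc (N + 1) (phi ^ j) with hP
  have hcastP : ∀ d, coeff d (P : SQ) = if d < N + 1 then coeff d (phi ^ j) else 0 := by
    intro d
    rw [Polynomial.coeff_coe, hP, coeff_trunc]
  have hdvd : (Polynomial.X : Polynomial ℚ) ^ (N + 1) ∣
      (1 - Polynomial.X) ^ j * P - (1 + Polynomial.X) ^ (3 * j) := by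
    rw [Polynomial.X_pow_dvd_iff]
    intro d hd
    have hcast : (((1 - Polynomial.X) ^ j * P - (1 + Polynomial.X) ^ (3 * j) : Polynomial ℚ) : SQ)
        = (1 - X) ^ j * ((P : SQ) - phi ^ j) := by
      push_cast
      rw [mul_sub, one_sub_pow_mul_phi_pow]
    have hXdvd : (X : SQ) ^ (N + 1) ∣ (1 - X) ^ j * ((P : SQ) - phi ^ j) := by
      apply Dvd.dvd.mul_left
      rw [PowerSeries.X_pow_dvd_iff]
      intro m hm
      rw [map_sub, hcastP, if_pos hm, sub_self]
    rw [PowerSeries.X_pow_dvd_iff] at hXdvd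
    rw [← Polynomial.coeff_coe, hcast]
    exact hXdvd d hd
  obtain ⟨Q0, hQ0⟩ := hdvd
  have haev := congrArg (Polynomial.aeval wq) hQ0
  simp only [map_sub, map_mul, map_pow, map_add, map_one, Polynomial.aeval_X] at haev
  -- haev : (1 - wq)^j * aeval wq P - (1 + wq)^(3*j) = wq^(N+1) * aeval wq Q0
  have key : (1 + wq) ^ (3 * j) * Vw ^ j
      = Polynomial.aeval wq P * ((1 - wq) ^ j * Vw ^ j)
        - wq ^ (N + 1) * (Polynomial.aeval wq Q0 * Vw ^ j) := by
    linear_combination (-(Vw ^ j)) * haev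
  rw [← mul_pow, one_sub_wq_mul_Vw, one_pow, mul_one] at key
  have hco := congrArg (coeff N) key
  have hz : coeff N (wq ^ (N + 1) * (Polynomial.aeval wq Q0 * Vw ^ j)) = 0 := by
    have hd : (X : SQ) ^ (N + 1) ∣ wq ^ (N + 1) * (Polynomial.aeval wq Q0 * Vw ^ j) :=
      Dvd.dvd.mul_right (pow_dvd_pow_of_dvd X_dvd_wq _) _
    rw [PowerSeries.X_pow_dvd_iff] at hd
    exact hd N (by omega)
  rw [map_sub, hz, sub_zero] at hco
  rw [hco, Polynomial.aeval_eq_sum_range' (n := N + 1) (by rw [hP]; exact natDegree_trunc_lt _ _) wq]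
  rw [map_sum]
  apply Finset.sum_congr rfl
  intro m hm
  rw [Finset.mem_range] at hm
  rw [map_smul, smul_eq_mul, hP, coeff_trunc, if_pos hm]

/-- coefficient of `X * f'`. -/
lemma coeff_X_mul_derivative (f : SQ) (m : ℕ) :
    coeff m (X * (d⁄dX ℚ) f) = (m : ℚ) * coeff m f := by
  cases m with
  | zero =>
    have h : (X : SQ) ∣ X * (d⁄dX ℚ) f := Dvd.intro _ rfl
    rw [PowerSeries.X_dvd_iff] at h
    rw [← coeff_zero_eq_constantCoeff_apply] at h
    rw [h]
    norm_num
  | succ m =>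
    rw [PowerSeries.coeff_succ_X_mul, PowerSeries.coeff_derivative]
    push_cast
    ring

lemma keyK {n j : ℕ} (h1 : 1 ≤ j) (hj : j ≤ n) :
    (n : SQ) * ((d⁄dX ℚ) (phi ^ j) * phi ^ (n - j)) = (j : SQ) * (d⁄dX ℚ) (phi ^ n) := by
  rw [Derivation.leibniz_pow, Derivation.leibniz_pow]
  have hpow : phi ^ (j - 1) * phi ^ (n - j) = phi ^ (n - 1) := by
    rw [← pow_add]
    congr 1
    omega
  simp only [smul_eq_mul, nsmul_eq_mul]
  linear_combination ((n : SQ) * (j : SQ) * (d⁄dX ℚ) phi) * hpow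

/-- The Lagrange inversion induction. -/
theorem lif : ∀ n : ℕ, ∀ j : ℕ, 1 ≤ j → j ≤ n →
    (n : ℚ) * coeff n (wq ^ j) = (j : ℚ) * coeff (n - j) (phi ^ n) := by
  intro n
  induction n using Nat.strong_induction_on with
  | _ n ih =>
  intro j hj1 hjn
  have hwj : wq ^ j = X ^ j * ((1 + wq) ^ (3 * j) * Vw ^ j) := by
    conv_lhs => rw [wq_eq_X_mul]
    rw [mul_pow, mul_pow, pow_mul]
  have hsplit : coeff n (wq ^ j) = coeff (n - j) ((1 + wq) ^ (3 * j) * Vw ^ j) := by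
    rw [hwj, PowerSeries.coeff_X_pow_mul', if_pos hjn]
  rcases eq_or_lt_of_le hjn with rfl | hlt
  · rw [hsplit, Nat.sub_self]
    have hV0 : constantCoeff Vw = 1 := by
      rw [Vw, PowerSeries.constantCoeff_invOfUnit]
      simp
    simp [coeff_zero_eq_constantCoeff_apply, constantCoeff_wq, hV0, constantCoeff_phi_pow]
  · have hN1 : 1 ≤ n - j := by omega
    have hNlt : n - j < n := by omega
    rw [hsplit, expansion]
    have hsum : ((n - j : ℕ) : ℚ) *
          ∑ m ∈ Finset.range ((n-j) + 1), coeff m (phi ^ j) * coeff (n-j) (wq ^ m)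
        = coeff (n-j) ((X * (d⁄dX ℚ) (phi ^ j)) * phi ^ (n-j)) := by
      rw [PowerSeries.coeff_mul, Finset.Nat.sum_antidiagonal_eq_sum_range_succ_mk, Finset.mul_sum]
      apply Finset.sum_congr rfl
      intro m hm
      rw [Finset.mem_range] at hm
      rw [coeff_X_mul_derivative]
      rcases Nat.eq_zero_or_pos m with rfl | hm1
      · rw [pow_zero, PowerSeries.coeff_one, if_neg (by omega)]
        push_cast
        ring
      · have hih := ih (n-j) hNlt m hm1 (by omega)
        linear_combination (coeff m (phi ^ j)) * hih
    have hnatmul : ∀ (k : ℕ) (f : SQ) (d : ℕ),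
        coeff d ((k : SQ) * f) = (k : ℚ) * coeff d f := by
      intro k f d
      rw [← map_natCast (C (R := ℚ)) k, PowerSeries.coeff_C_mul]
    have hk := keyK hj1 hjn
    have hk2 : (n : SQ) * ((X * (d⁄dX ℚ) (phi ^ j)) * phi ^ (n-j))
        = (j : SQ) * (X * (d⁄dX ℚ) (phi ^ n)) := by
      linear_combination X * hk
    have hB := congrArg (coeff (n-j)) hk2
    rw [hnatmul, hnatmul, coeff_X_mul_derivative] at hB
    have hNne : ((n - j : ℕ) : ℚ) ≠ 0 := Nat.cast_ne_zero.mpr (by omega)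
    apply mul_left_cancel₀ hNne
    calc ((n-j : ℕ):ℚ) * ((n:ℚ) * ∑ m ∈ Finset.range ((n-j) + 1),
            coeff m (phi ^ j) * coeff (n-j) (wq ^ m))
        = (n:ℚ) * (((n-j : ℕ):ℚ) * ∑ m ∈ Finset.range ((n-j) + 1),
            coeff m (phi ^ j) * coeff (n-j) (wq ^ m)) := by ring
    _ = (n:ℚ) * coeff (n-j) ((X * (d⁄dX ℚ) (phi ^ j)) * phi ^ (n-j)) := by rw [hsum]
    _ = (j:ℚ) * (((n-j:ℕ):ℚ) * coeff (n-j) (phi ^ n)) := hB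
    _ = ((n-j:ℕ):ℚ) * ((j:ℚ) * coeff (n-j) (phi ^ n)) := by ring

/-! ### Extracting the binomial formula -/

lemma cseq_formula {k : ℕ} (hk : 1 ≤ k) :
    (k : ℚ) * ((cseq k : ℤ) : ℚ) = coeff (k - 1) (phi ^ k) := by
  have h := lif k 1 le_rfl hk
  rwa [pow_one, wq, coeff_wR, Nat.cast_one, one_mul] at h

lemma coeff_one_add_X_pow (K i : ℕ) : coeff i ((1 + X : SQ) ^ K) = (K.choose i : ℚ) := by
  have hc : (((1 + Polynomial.X) ^ K : Polynomial ℚ) : SQ) = (1 + X : SQ) ^ K := by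
    rw [Polynomial.coe_pow, Polynomial.coe_add, Polynomial.coe_one, Polynomial.coe_X]
  rw [← hc, Polynomial.coeff_coe, Polynomial.coeff_one_add_X_pow]

lemma Uval_pow (k : ℕ) : Uval ^ k = ((invOneSubPow ℚ k : SQˣ) : SQ) := by
  have h1 : ((1 - X : SQ)) ^ k * Uval ^ k = 1 := by
    rw [← mul_pow, one_sub_X_mul_Uval, one_pow]
  have h2 : ((1 - X : SQ)) ^ k * ((invOneSubPow ℚ k : SQˣ) : SQ) = 1 := by
    rw [← invOneSubPow_inv_eq_one_sub_pow]
    exact (invOneSubPow ℚ k).inv_val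
  linear_combination ((invOneSubPow ℚ k : SQˣ) : SQ) * h1 - Uval ^ k * h2

lemma coeff_Uval_pow {k : ℕ} (hk : 1 ≤ k) (d : ℕ) :
    coeff d (Uval ^ k) = ((k - 1 + d).choose (k - 1) : ℚ) := by
  rw [Uval_pow, invOneSubPow_val_eq_mk_sub_one_add_choose_of_pos _ _ hk, PowerSeries.coeff_mk]

lemma coeff_phi_pow {k : ℕ} (hk : 1 ≤ k) (d : ℕ) :
    coeff d (phi ^ k) =
      ∑ i ∈ Finset.range (d + 1),
        ((3 * k).choose i : ℚ) * ((k - 1 + (d - i)).choose (k - 1) : ℚ) := by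
  rw [phi_pow_eq, PowerSeries.coeff_mul, Finset.Nat.sum_antidiagonal_eq_sum_range_succ_mk]
  apply Finset.sum_congr rfl
  intro i _
  rw [coeff_one_add_X_pow, coeff_Uval_pow hk]

/-! ### The formula identification -/

theorem Ncn_eq_cseq' {n : ℕ} (hn : 2 ≤ n) :
    (1 / ((n : ℚ) - 1)) *
      ∑ i ∈ Finset.Icc (n - 1) (2 * n - 3),
        ((3 * n - 3).choose (n + i) : ℚ) * ((i - 1).choose (i + 1 - n) : ℚ)
      = ((cseq (n - 1) : ℤ) : ℚ) := by
  have hk := cseq_formula (k := n - 1) (by omega)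
  rw [coeff_phi_pow (by omega)] at hk
  have hIcc : ∑ i ∈ Finset.Icc (n-1) (2*n-3),
        ((3*n-3).choose (n+i) : ℚ) * ((i-1).choose (i+1-n) : ℚ)
      = ∑ b ∈ Finset.range (n-1),
        ((3*n-3).choose (n + (n-1+b)) : ℚ) * ((n-2+b).choose b : ℚ) := by
    rw [← Finset.Ico_add_one_right_eq_Icc, Finset.sum_Ico_eq_sum_range,
      show 2*n-3+1 - (n-1) = n-1 by omega]
    apply Finset.sum_congr rfl
    intro b _
    rw [show n-1+b-1 = n-2+b by omega, show n-1+b+1-n = b by omega]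
  have hrev : ∑ b ∈ Finset.range (n-1),
        ((3*n-3).choose (n + (n-1+b)) : ℚ) * ((n-2+b).choose b : ℚ)
      = ∑ i ∈ Finset.range ((n-1-1) + 1),
        ((3*(n-1)).choose i : ℚ) * (((n-1-1) + ((n-1-1) - i)).choose (n-1-1) : ℚ) := by
    rw [show (n-1-1) + 1 = n-1 by omega]
    conv_rhs => rw [← Finset.sum_range_reflect]
    apply Finset.sum_congr rfl
    intro b hb
    rw [Finset.mem_range] at hb
    have c1 : (3*(n-1)).choose (n-1-1-b) = (3*n-3).choose (n + (n-1+b)) := by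
      rw [show 3*(n-1) = 3*n-3 by omega, show n-1-1-b = n-2-b by omega,
          show n + (n-1+b) = 2*n-1+b by omega]
      have h := Nat.choose_symm (n := 3*n-3) (k := n-2-b) (by omega)
      rw [show 3*n-3 - (n-2-b) = 2*n-1+b by omega] at h
      exact h.symm
    have c2 : ((n-1-1) + ((n-1-1) - (n-1-1-b))).choose (n-1-1) = (n-2+b).choose b := by
      rw [show (n-1-1) - (n-1-1-b) = b by omega, show n-1-1 = n-2 by omega]
      have h := Nat.choose_symm (n := n-2+b) (k := b) (by omega)
      rw [show n-2+b-b = n-2 by omega] at h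
      exact h
    rw [c1, c2]
  rw [hIcc, hrev, ← hk]
  have hne : ((n:ℚ) - 1) ≠ 0 := by
    have h2 : (2:ℚ) ≤ (n:ℚ) := by exact_mod_cast hn
    intro hcon
    linarith
  have hcast : ((n-1 : ℕ) : ℚ) = (n:ℚ) - 1 := by
    rw [Nat.cast_sub (by omega), Nat.cast_one]
  rw [hcast, one_div, inv_mul_cancel_left₀ hne]


end NcnAux

open Finset

lemma Ncn_eq_cseq {n : ℕ} (hn : 2 ≤ n) : Ncn n = ((cseq (n - 1) : ℤ) : ℚ) := by
  rw [Ncn, if_neg (by omega)]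
  exact Ncn_eq_cseq' hn

/-- The Deutsch–Sagan congruence for connected noncrossing graphs. -/
theorem Ncn_mod_three (n : ℕ) (hn : 1 ≤ n) :
    ((∃ m : ℕ, n = 3 ^ m ∨ n = 2 * 3 ^ m) → ∃ k : ℤ, Ncn n = 3 * k + 1) ∧
    ((∃ a b : ℕ, b < a ∧ n = 3 ^ a + 3 ^ b) → ∃ k : ℤ, Ncn n = 3 * k + 2) ∧
    ((¬ (∃ m : ℕ, n = 3 ^ m ∨ n = 2 * 3 ^ m) ∧
      ¬ (∃ a b : ℕ, b < a ∧ n = 3 ^ a + 3 ^ b)) → ∃ k : ℤ, Ncn n = 3 * k) := by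
  rcases eq_or_lt_of_le hn with h1 | h2
  · -- the case n = 1
    have hn1 : n = 1 := h1.symm
    subst hn1
    refine ⟨fun _ => ⟨0, by norm_num [Ncn]⟩, ?_, ?_⟩
    · rintro ⟨a, b, hba, hab⟩
      exfalso
      have h3 : 3 ≤ 3 ^ a := by
        calc (3:ℕ) = 3 ^ 1 := by norm_num
        _ ≤ 3 ^ a := Nat.pow_le_pow_right (by norm_num) (by omega)
      have h4 : 1 ≤ 3 ^ b := Nat.one_le_pow _ _ (by norm_num)
      omega
    · rintro ⟨hno, -⟩
      exact absurd ⟨0, Or.inl (by norm_num)⟩ hno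
  · have hn2 : 2 ≤ n := h2
    have bridge : ∀ v : ℤ, ((cseq (n-1) : ℤ) : ZMod 3) = (v : ZMod 3) →
        ∃ k : ℤ, Ncn n = 3 * k + v := by
      intro v hv
      have hd : ((cseq (n-1) - v : ℤ) : ZMod 3) = 0 := by push_cast; rw [hv]; ring
      rw [ZMod.intCast_zmod_eq_zero_iff_dvd] at hd
      obtain ⟨k, hk⟩ := hd
      refine ⟨k, ?_⟩
      rw [Ncn_eq_cseq hn2]
      have hc : (cseq (n-1) : ℤ) = 3 * k + v := by omega
      exact_mod_cast hc
    refine ⟨?_, ?_, ?_⟩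
    · intro h
      have := bridge 1 (by rw [cseq_val_case1 hn2 h]; norm_num)
      simpa using this
    · intro h
      have := bridge 2 (by rw [cseq_val_case2 hn2 h]; norm_num)
      simpa using this
    · rintro ⟨ha, hb⟩
      have := bridge 0 (by rw [cseq_val_case0 hn2 ha hb]; norm_num)
      simpa using this
end

section
/- There is a unique formal power series α over ℤ with constant term 0 satisfying α - 3α² + 2α³ = X, and in the ring of formal power series over ℤ/3ℤ the reduction of α modulo 3 equals Σ_{m≥0} X^{3^m}, i.e., the coefficient of X^k in α is congruent modulo 3 to 1 if k is a power of 3 and to 0 otherwise. -/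
open PowerSeries
open scoped Classical

noncomputable section AlphaAux

variable {R : Type*} [CommRing R]

/-- The fixed-point map: `α - 3α² + 2α³ = X` iff `α = Φ α`. -/
noncomputable def alphaPhi (a : PowerSeries R) : PowerSeries R :=
  PowerSeries.X + 3 * a ^ 2 - 2 * a ^ 3

lemma alphaPhi_fixed_iff (a : PowerSeries R) :
    a - 3 * a ^ 2 + 2 * a ^ 3 = PowerSeries.X ↔ a = alphaPhi a := by
  unfold alphaPhi
  constructor <;> intro h <;> linear_combination h

lemma coeff_sq_congr {n : ℕ} {a b : PowerSeries R}
    (h0a : constantCoeff a = 0) (h0b : constantCoeff b = 0)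
    (h : ∀ i < n, coeff i a = coeff i b) :
    coeff n (a ^ 2) = coeff n (b ^ 2) := by
  rw [pow_two, pow_two, coeff_mul, coeff_mul]
  refine Finset.sum_congr rfl fun p hp => ?_
  rw [Finset.HasAntidiagonal.mem_antidiagonal] at hp
  rcases Nat.eq_zero_or_pos p.1 with h1 | h1
  · rw [h1, coeff_zero_eq_constantCoeff, h0a, h0b, zero_mul, zero_mul]
  rcases Nat.eq_zero_or_pos p.2 with h2 | h2
  · rw [h2, coeff_zero_eq_constantCoeff, h0a, h0b, mul_zero, mul_zero]
  have hp1 : p.1 < n := by omega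
  have hp2 : p.2 < n := by omega
  rw [h _ hp1, h _ hp2]

lemma coeff_cube_congr {n : ℕ} {a b : PowerSeries R}
    (h0a : constantCoeff a = 0) (h0b : constantCoeff b = 0)
    (h : ∀ i < n, coeff i a = coeff i b) :
    coeff n (a ^ 3) = coeff n (b ^ 3) := by
  have ha3 : a ^ 3 = a * a ^ 2 := by ring
  have hb3 : b ^ 3 = b * b ^ 2 := by ring
  rw [ha3, hb3, coeff_mul, coeff_mul]
  refine Finset.sum_congr rfl fun p hp => ?_
  rw [Finset.HasAntidiagonal.mem_antidiagonal] at hp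
  rcases Nat.eq_zero_or_pos p.1 with h1 | h1
  · rw [h1, coeff_zero_eq_constantCoeff, h0a, h0b, zero_mul, zero_mul]
  have hp2 : p.2 < n := by omega
  rw [coeff_sq_congr h0a h0b (fun i hi => h i (lt_trans hi hp2))]
  rcases Nat.eq_zero_or_pos p.2 with h2 | h2
  · have hsq : coeff p.2 (b ^ 2) = 0 := by
      rw [h2, pow_two, coeff_zero_eq_constantCoeff, map_mul, h0b, zero_mul]
    rw [hsq, mul_zero, mul_zero]
  have hp1 : p.1 < n := by omega
  rw [h _ hp1]

lemma coeff_alphaPhi_congr {n : ℕ} {a b : PowerSeries R}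
    (h0a : constantCoeff a = 0) (h0b : constantCoeff b = 0)
    (h : ∀ i < n, coeff i a = coeff i b) :
    coeff n (alphaPhi a) = coeff n (alphaPhi b) := by
  unfold alphaPhi
  have h2 : coeff n (a ^ 2) = coeff n (b ^ 2) := coeff_sq_congr h0a h0b h
  have h3 : coeff n (a ^ 3) = coeff n (b ^ 3) := coeff_cube_congr h0a h0b h
  have e2 : (3 : PowerSeries R) * a ^ 2 = a ^ 2 + a ^ 2 + a ^ 2 := by ring
  have e2' : (3 : PowerSeries R) * b ^ 2 = b ^ 2 + b ^ 2 + b ^ 2 := by ring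
  have e3 : (2 : PowerSeries R) * a ^ 3 = a ^ 3 + a ^ 3 := by ring
  have e3' : (2 : PowerSeries R) * b ^ 3 = b ^ 3 + b ^ 3 := by ring
  simp only [map_add, map_sub, e2, e2', e3, e3', h2, h3]

lemma constantCoeff_alphaPhi {a : PowerSeries R} (h : constantCoeff a = 0) :
    constantCoeff (alphaPhi a) = 0 := by
  simp [alphaPhi, map_sub, map_add, map_mul, map_pow, h]

lemma alphaPhi_unique {a b : PowerSeries R}
    (h0a : constantCoeff a = 0) (h0b : constantCoeff b = 0)
    (ha : a = alphaPhi a) (hb : b = alphaPhi b) : a = b := by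
  ext n
  induction n using Nat.strong_induction_on with
  | _ n ih =>
    calc coeff n a = coeff n (alphaPhi a) := by rw [← ha]
    _ = coeff n (alphaPhi b) := coeff_alphaPhi_congr h0a h0b ih
    _ = coeff n b := by rw [← hb]

/-- Iterates of the fixed point map starting from 0. -/
noncomputable def alphaIter (k : ℕ) : PowerSeries R := (alphaPhi)^[k] 0

lemma constantCoeff_alphaIter (k : ℕ) : constantCoeff (alphaIter k : PowerSeries R) = 0 := by
  induction k with
  | zero => simp [alphaIter]
  | succ k ih =>
    rw [alphaIter, Function.iterate_succ_apply']
    exact constantCoeff_alphaPhi ih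

lemma alphaIter_stable : ∀ n j k : ℕ, n < j → n < k →
    coeff n (alphaIter j : PowerSeries R) = coeff n (alphaIter k : PowerSeries R) := by
  intro n
  induction n using Nat.strong_induction_on with
  | _ n ih =>
    intro j k hj hk
    obtain ⟨j', rfl⟩ : ∃ j', j = j' + 1 := ⟨j - 1, by omega⟩
    obtain ⟨k', rfl⟩ : ∃ k', k = k' + 1 := ⟨k - 1, by omega⟩
    rw [alphaIter, alphaIter, Function.iterate_succ_apply', Function.iterate_succ_apply']
    exact coeff_alphaPhi_congr (constantCoeff_alphaIter j') (constantCoeff_alphaIter k')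
      (fun i hi => ih i hi j' k' (by omega) (by omega))

/-- The solution over any commutative ring. -/
noncomputable def alphaSol : PowerSeries R := mk fun n => coeff n (alphaIter (n + 1))

lemma constantCoeff_alphaSol : constantCoeff (alphaSol : PowerSeries R) = 0 := by
  rw [← coeff_zero_eq_constantCoeff_apply, alphaSol, coeff_mk,
    coeff_zero_eq_constantCoeff_apply, constantCoeff_alphaIter]

lemma alphaSol_coeff_eq (n j : ℕ) (h : n < j) :
    coeff n (alphaSol : PowerSeries R) = coeff n (alphaIter j) := by
  rw [alphaSol, coeff_mk]
  exact alphaIter_stable n (n + 1) j (by omega) h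

lemma alphaSol_fixed : (alphaSol : PowerSeries R) = alphaPhi alphaSol := by
  ext n
  calc coeff n (alphaSol : PowerSeries R)
      = coeff n (alphaIter (n + 2)) := alphaSol_coeff_eq n (n + 2) (by omega)
    _ = coeff n (alphaPhi (alphaIter (n + 1))) := by
        rw [alphaIter, Function.iterate_succ_apply']; rfl
    _ = coeff n (alphaPhi alphaSol) :=
        coeff_alphaPhi_congr (constantCoeff_alphaIter (n + 1)) constantCoeff_alphaSol
          (fun i hi => (alphaSol_coeff_eq i (n + 1) (by omega)).symm)

end AlphaAux

/-- There is a unique power series `α` over `ℤ` with zero constant term satisfying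
`α - 3α² + 2α³ = X`, and modulo 3 it equals `Σ_{m ≥ 0} X^(3^m)`. -/
theorem alpha_exists_unique_and_mod_three :
    (∃! α : PowerSeries ℤ, PowerSeries.constantCoeff α = 0 ∧
        α - 3 * α ^ 2 + 2 * α ^ 3 = PowerSeries.X) ∧
    (∀ α : PowerSeries ℤ, PowerSeries.constantCoeff α = 0 →
        α - 3 * α ^ 2 + 2 * α ^ 3 = PowerSeries.X →
      PowerSeries.map (Int.castRingHom (ZMod 3)) α
        = PowerSeries.mk fun k => if ∃ m : ℕ, k = 3 ^ m then 1 else 0) := by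
  constructor
  · refine ⟨alphaSol, ⟨constantCoeff_alphaSol, (alphaPhi_fixed_iff _).2 alphaSol_fixed⟩,
      fun b hb => ?_⟩
    exact alphaPhi_unique hb.1 constantCoeff_alphaSol
      ((alphaPhi_fixed_iff _).1 hb.2) alphaSol_fixed
  · intro α h0 heq
    have hchar : CharP (PowerSeries (ZMod 3)) 3 :=
      charP_of_injective_ringHom (PowerSeries.C_injective (R := ZMod 3)) 3
    haveI := hchar
    have h3 : (3 : PowerSeries (ZMod 3)) = 0 := by
      have := CharP.cast_eq_zero (PowerSeries (ZMod 3)) 3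
      simpa using this
    set β : PowerSeries (ZMod 3) := PowerSeries.mk
      (fun k => if ∃ m : ℕ, k = 3 ^ m then 1 else 0) with hβ
    -- constant coefficient of β is 0
    have hβ0 : PowerSeries.constantCoeff β = 0 := by
      rw [← coeff_zero_eq_constantCoeff_apply, hβ, PowerSeries.coeff_mk, if_neg]
      rintro ⟨m, hm⟩
      have := pow_pos (show 0 < 3 by norm_num) m
      omega
    -- coefficient of β³
    have hβ3 : ∀ n : ℕ, PowerSeries.coeff n (β ^ 3)
        = if ∃ m : ℕ, n = 3 ^ (m + 1) then 1 else 0 := by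
      intro n
      set M := n with hM
      set t : PowerSeries (ZMod 3) := ∑ m ∈ Finset.range (M + 1), PowerSeries.X ^ (3 ^ m)
        with ht
      have hnM : n < 3 ^ (M + 1) := by
        calc n < 3 ^ n := Nat.lt_pow_self (by norm_num)
        _ < 3 ^ (M + 1) := Nat.pow_lt_pow_right (by norm_num) (by omega)
      -- β - t vanishes in degrees < 3^(M+1)
      have hdiff : ∀ i < 3 ^ (M + 1), PowerSeries.coeff i (β - t) = 0 := by
        intro i hi
        rw [map_sub, hβ, PowerSeries.coeff_mk, ht, map_sum]
        simp only [PowerSeries.coeff_X_pow]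
        by_cases hex : ∃ m : ℕ, i = 3 ^ m
        · obtain ⟨m, rfl⟩ := hex
          have hmM : m < M + 1 := by
            by_contra hc
            have h1 : (3:ℕ) ^ (M + 1) ≤ 3 ^ m := Nat.pow_le_pow_right (by norm_num) (by omega)
            omega
          rw [if_pos ⟨m, rfl⟩, Finset.sum_eq_single m
            (fun b _ hb => if_neg (fun hc => hb (Nat.pow_right_injective (by norm_num) hc.symm)))
            (fun h => absurd (Finset.mem_range.2 hmM) h), if_pos rfl, sub_self]
        · rw [if_neg hex, Finset.sum_eq_zero (fun m _ => if_neg (fun hc => hex ⟨m, hc⟩)),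
            sub_zero]
      -- hence β³ and t³ agree in degree n
      have hcube_eq : PowerSeries.coeff n (β ^ 3) = PowerSeries.coeff n (t ^ 3) := by
        have hfac : β ^ 3 - t ^ 3 = (β - t) * (β ^ 2 + β * t + t ^ 2) := by ring
        have : PowerSeries.coeff n (β ^ 3 - t ^ 3) = 0 := by
          rw [hfac, PowerSeries.coeff_mul]
          refine Finset.sum_eq_zero fun p hp => ?_
          rw [Finset.HasAntidiagonal.mem_antidiagonal] at hp
          rw [hdiff p.1 (by omega), zero_mul]
        rw [map_sub] at this
        exact sub_eq_zero.mp this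
      -- compute t³ via the Frobenius
      have ht3 : t ^ 3 = ∑ m ∈ Finset.range (M + 1), PowerSeries.X ^ (3 ^ (m + 1)) := by
        rw [ht, sum_pow_char 3]
        refine Finset.sum_congr rfl fun m _ => ?_
        rw [← pow_mul, ← pow_succ]
      rw [hcube_eq, ht3, map_sum]
      simp only [PowerSeries.coeff_X_pow]
      by_cases hex : ∃ m : ℕ, n = 3 ^ (m + 1)
      · obtain ⟨m, hm⟩ := hex
        have hmM : m < M + 1 := by
          by_contra hc
          have : 3 ^ (M + 1) ≤ 3 ^ (m + 1) := Nat.pow_le_pow_right (by norm_num) (by omega)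
          omega
        rw [if_pos ⟨m, hm⟩, Finset.sum_eq_single m
          (fun b _ hb => if_neg (fun hc => hb (by
            have h1 : (3:ℕ) ^ (b + 1) = 3 ^ (m + 1) := by rw [← hc]; exact hm
            have := Nat.pow_right_injective (show 2 ≤ 3 by norm_num) h1
            omega)))
          (fun h => absurd (Finset.mem_range.2 hmM) h), if_pos hm]
      · rw [if_neg hex, Finset.sum_eq_zero (fun m _ => if_neg (fun hc => hex ⟨m, hc⟩))]
    -- β is a fixed point of the map
    have hβfix : β = alphaPhi β := by
      have hPhi : alphaPhi β = PowerSeries.X + β ^ 3 := by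
        unfold alphaPhi
        linear_combination (β ^ 2 - β ^ 3) * h3
      rw [hPhi]
      ext k
      rw [map_add, hβ3, PowerSeries.coeff_X, hβ, PowerSeries.coeff_mk]
      by_cases hk : k = 1
      · subst hk
        rw [if_pos ⟨0, by norm_num⟩, if_pos rfl, if_neg, add_zero]
        rintro ⟨m, hm⟩
        have h1 : 1 ≤ 3 ^ m := Nat.one_le_pow _ _ (by norm_num)
        rw [pow_succ] at hm
        omega
      · rw [if_neg hk, zero_add]
        by_cases hex : ∃ m : ℕ, k = 3 ^ m
        · obtain ⟨m, hm⟩ := hex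
          have hm0 : m ≠ 0 := by rintro rfl; simp at hm; exact hk hm
          obtain ⟨m', rfl⟩ : ∃ m', m = m' + 1 := ⟨m - 1, by omega⟩
          rw [if_pos ⟨m' + 1, hm⟩, if_pos ⟨m', hm⟩]
        · rw [if_neg hex, if_neg (fun ⟨m, hm⟩ => hex ⟨m + 1, hm⟩)]
    -- the reduction of α is also a fixed point
    set ab : PowerSeries (ZMod 3) := PowerSeries.map (Int.castRingHom (ZMod 3)) α with hab
    have hab0 : PowerSeries.constantCoeff ab = 0 := by
      rw [hab, ← coeff_zero_eq_constantCoeff_apply, PowerSeries.coeff_map,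
        coeff_zero_eq_constantCoeff_apply, h0, map_zero]
    have habfix : ab = alphaPhi ab := by
      rw [← alphaPhi_fixed_iff]
      have := congrArg (PowerSeries.map (Int.castRingHom (ZMod 3))) heq
      simpa [map_sub, map_add, map_mul, map_pow, map_ofNat, PowerSeries.map_X] using this
    exact alphaPhi_unique hab0 hβ0 habfix hβfix
end

section
/- For every integer n ≥ 0 and every rational number a, Σ_{k=0}^{n} C(2n+a, n-k)·C(a+k-1, k) = 2^{2n}·C(a/2 + n - 1/2, n), where all binomial coefficients are generalized binomial coefficients with rational upper argument. -/
open Finset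

/-- Generalized binomial coefficient `C(q, k) = q(q-1)⋯(q-k+1)/k!` for rational `q`. -/
noncomputable def qchoose (q : ℚ) (k : ℕ) : ℚ :=
  (∏ j ∈ Finset.range k, (q - j)) / (k.factorial : ℚ)

lemma qchoose_zero (q : ℚ) : qchoose q 0 = 1 := by
  simp [qchoose]

lemma qchoose_succ (q : ℚ) (k : ℕ) :
    qchoose q (k + 1) = qchoose q k * (q - k) / (k + 1) := by
  unfold qchoose
  rw [Finset.prod_range_succ, Nat.factorial_succ, Nat.cast_mul, Nat.cast_add, Nat.cast_one,
    div_mul_eq_mul_div, div_div]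
  rw [mul_comm ((k:ℚ) + 1) (k.factorial : ℚ)]

lemma qchoose_succ_succ (q : ℚ) (k : ℕ) :
    qchoose (q + 1) (k + 1) = qchoose q k * (q + 1) / (k + 1) := by
  unfold qchoose
  rw [Finset.prod_range_succ', Nat.factorial_succ, Nat.cast_mul, Nat.cast_add, Nat.cast_one]
  have h1 : ∏ j ∈ Finset.range k, (q + 1 - (↑(j + 1) : ℚ)) = ∏ j ∈ Finset.range k, (q - j) := by
    refine Finset.prod_congr rfl fun j _ => ?_
    push_cast; ring
  rw [h1, Nat.cast_zero, sub_zero, div_mul_eq_mul_div, div_div]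
  rw [mul_comm ((k:ℚ) + 1) (k.factorial : ℚ)]

/-- A terminating form of Kummer's theorem. -/
theorem kummer_identity (n : ℕ) (a : ℚ) :
    ∑ k ∈ Finset.range (n + 1),
        qchoose (2 * n + a) (n - k) * qchoose (a + k - 1) k
      = 2 ^ (2 * n) * qchoose (a / 2 + n - 1 / 2) n := by
  induction n with
  | zero => simp [qchoose]
  | succ n ih =>
    set g : ℕ → ℚ := fun j =>
      -(j : ℚ) / (n + 1) * qchoose (2 * n + a + 1) (n + 1 - j) * qchoose (a + j - 1) j with hg
    have key : ∀ k ≤ n,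
        qchoose (2 * ((n : ℚ) + 1) + a) (n + 1 - k) * qchoose (a + k - 1) k
          = 2 * (2 * n + 1 + a) / ((n : ℚ) + 1) *
              (qchoose (2 * n + a) (n - k) * qchoose (a + k - 1) k)
            + (g (k + 1) - g k) := by
      intro k hk
      obtain ⟨m, rfl⟩ : ∃ m, n = k + m := ⟨n - k, by omega⟩
      simp only [hg, show k + m + 1 - k = m + 1 from by omega,
        show k + m - k = m from by omega, show k + m + 1 - (k + 1) = m from by omega]
      have e1 : (2 * ((↑(k + m) : ℚ) + 1) + a) = (2 * (↑(k + m) : ℚ) + a + 1) + 1 := by ring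
      have e2 : (a + (↑(k + 1) : ℚ) - 1) = (a + (k : ℚ) - 1) + 1 := by push_cast; ring
      rw [e1, qchoose_succ_succ, e2, qchoose_succ_succ, qchoose_succ]
      have h : qchoose (2 * (↑(k + m) : ℚ) + a) m * (2 * (↑(k + m) : ℚ) + a + 1) / (m + 1)
          = qchoose (2 * (↑(k + m) : ℚ) + a + 1) m * (2 * (↑(k + m) : ℚ) + a + 1 - m) / (m + 1) :=
        (qchoose_succ_succ _ m).symm.trans (qchoose_succ _ m)
      set A := qchoose (2 * (↑(k + m) : ℚ) + a) m
      set U := qchoose (2 * (↑(k + m) : ℚ) + a + 1) m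
      set B := qchoose (a + (k : ℚ) - 1) k
      have hm1 : ((m : ℚ) + 1) ≠ 0 := by positivity
      have hk1 : ((k : ℚ) + 1) ≠ 0 := by positivity
      have hs1 : ((k : ℚ) + (m : ℚ) + 1) ≠ 0 := by positivity
      push_cast at h ⊢
      field_simp at h ⊢
      linear_combination (-2 * B * ((m : ℚ) + 1)) * h
    have hn1 : ((n : ℚ) + 1) ≠ 0 := by positivity
    have hcast : (↑(n + 1) : ℚ) = (n : ℚ) + 1 := by push_cast; ring
    calc ∑ k ∈ Finset.range (n + 1 + 1),
            qchoose (2 * ↑(n + 1) + a) (n + 1 - k) * qchoose (a + k - 1) k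
        = (∑ k ∈ Finset.range (n + 1),
            qchoose (2 * ↑(n + 1) + a) (n + 1 - k) * qchoose (a + k - 1) k)
          + qchoose (2 * ↑(n + 1) + a) (n + 1 - (n + 1)) * qchoose (a + ↑(n + 1) - 1) (n + 1) :=
          Finset.sum_range_succ _ _
      _ = (∑ k ∈ Finset.range (n + 1),
            (2 * (2 * n + 1 + a) / ((n : ℚ) + 1) *
              (qchoose (2 * n + a) (n - k) * qchoose (a + k - 1) k)
            + (g (k + 1) - g k)))
          + qchoose (2 * ↑(n + 1) + a) 0 * qchoose (a + ↑(n + 1) - 1) (n + 1) := by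
          rw [Nat.sub_self]
          congr 1
          refine Finset.sum_congr rfl ?_
          intro k hkmem
          rw [show ((↑(n + 1) : ℚ)) = (n : ℚ) + 1 from hcast]
          exact key k (by simpa [Nat.lt_succ_iff] using Finset.mem_range.mp hkmem)
      _ = 2 * (2 * n + 1 + a) / ((n : ℚ) + 1) *
            (∑ k ∈ Finset.range (n + 1),
              qchoose (2 * n + a) (n - k) * qchoose (a + k - 1) k)
          + (g (n + 1) - g 0)
          + qchoose (2 * ↑(n + 1) + a) 0 * qchoose (a + ↑(n + 1) - 1) (n + 1) := by
          rw [Finset.sum_add_distrib, ← Finset.mul_sum, Finset.sum_range_sub]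
      _ = 2 ^ (2 * (n + 1)) * qchoose (a / 2 + ↑(n + 1) - 1 / 2) (n + 1) := by
          rw [ih]
          have hg0 : g 0 = 0 := by simp [hg]
          have hgn : g (n + 1) = -qchoose (a + ↑(n + 1) - 1) (n + 1) := by
            simp only [hg, Nat.sub_self, qchoose_zero]
            rw [hcast]
            field_simp
          have hR : qchoose (a / 2 + (↑(n + 1) : ℚ) - 1 / 2) (n + 1)
              = qchoose (a / 2 + (n : ℚ) - 1 / 2) n * (a / 2 + (n : ℚ) - 1 / 2 + 1) / (n + 1) := by
            rw [show (a / 2 + (↑(n + 1) : ℚ) - 1 / 2) = (a / 2 + (n : ℚ) - 1 / 2) + 1 from by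
              push_cast; ring]
            exact qchoose_succ_succ _ n
          rw [hg0, hgn, qchoose_zero, hR, show 2 * (n + 1) = 2 * n + 2 from by ring, pow_add]
          field_simp
          ring
end

section
/- For every integer n ≥ 0, f_1(n) = 2^{2n}·C(3n/2, n), where C(3n/2, n) is the generalized binomial coefficient with rational upper argument 3n/2. -/
set_option maxHeartbeats 2000000

open Finset

/-- `f₁(n) = Σ_{i=n}^{2n} C(3n+1, n+i+1)·C(i, n)`. -/
def f1 (n : ℕ) : ℕ :=
  ∑ i ∈ Finset.Icc n (2 * n), (3 * n + 1).choose (n + i + 1) * i.choose n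


lemma cL1 (m k : ℕ) : (m.choose (k+1) : ℚ) * ((k:ℚ)+1) = m.choose k * ((m:ℚ) - k) := by
  rcases le_or_gt k m with h | h
  · have h1 := Nat.choose_succ_right_eq m k
    have h2 : ((m - k : ℕ) : ℚ) = (m:ℚ) - k := Nat.cast_sub h
    calc (m.choose (k+1):ℚ) * ((k:ℚ)+1) = ((m.choose (k+1) * (k+1) : ℕ) : ℚ) := by push_cast; ring
      _ = ((m.choose k * (m-k) : ℕ) : ℚ) := by rw [h1]
      _ = m.choose k * ((m:ℚ) - k) := by push_cast [h2]; ring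
  · have z1 : m.choose (k+1) = 0 := Nat.choose_eq_zero_of_lt (by omega)
    have z2 : m.choose k = 0 := Nat.choose_eq_zero_of_lt h
    simp [z1, z2]

lemma cL3 (m k : ℕ) : ((m+1).choose (k+1) : ℚ) * ((k:ℚ)+1) = m.choose k * ((m:ℚ) + 1) := by
  have h := Nat.add_one_mul_choose_eq m k
  calc ((m+1).choose (k+1) : ℚ) * ((k:ℚ)+1) = (((m+1).choose (k+1) * (k+1) : ℕ) : ℚ) := by push_cast; ring
    _ = ((Nat.succ m * m.choose k : ℕ) : ℚ) := by rw [← h]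
    _ = m.choose k * ((m:ℚ)+1) := by push_cast; ring

lemma cL2 (m k : ℕ) : ((m+1).choose k : ℚ) * ((m:ℚ) + 1 - k) = m.choose k * ((m:ℚ) + 1) := by
  have a := cL1 (m+1) k
  have b := cL3 m k
  push_cast at a b ⊢
  linear_combination -a + b

def Qp (x y : ℚ) : ℚ :=
  -666 + 9*y + 116*y^2 - 29*y^3 - 8*y^4 + 2*y^5
  + x*(-1989 - 74*y + 231*y^2 - 20*y^3 - 8*y^4)
  + x^2*(-2296 - 144*y + 144*y^2 - y^3)
  + x^3*(-1286 - 86*y + 29*y^2)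
  + x^4*(-350 - 17*y) - 37*x^5

def Stm (n i : ℕ) : Prop :=
  3*(3*(n:ℚ)+5)*(3*(n:ℚ)+7)*
    (((n:ℚ)+1)*((n:ℚ)+2)^2*(((3*n+7).choose (n+i+3) : ℕ) : ℚ)*((i.choose (n+2) : ℕ) : ℚ)
     - 4*(3*(n:ℚ)+2)*(3*(n:ℚ)+4)*(3*(n:ℚ)+6)*(((3*n+1).choose (n+i+1) : ℕ) : ℚ)*((i.choose n : ℕ) : ℚ))
  = Qp (n:ℚ) ((i:ℚ)+1) * (((3*n+7).choose (n+i+4) : ℕ) : ℚ) * (((i+1).choose (n+1) : ℕ) : ℚ)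
    - Qp (n:ℚ) (i:ℚ) * (((3*n+7).choose (n+i+3) : ℕ) : ℚ) * ((i.choose (n+1) : ℕ) : ℚ)

lemma case_lt (n i : ℕ) (h : i < n) : Stm n i := by
  unfold Stm
  have z1 : i.choose n = 0 := Nat.choose_eq_zero_of_lt h
  have z2 : i.choose (n+1) = 0 := Nat.choose_eq_zero_of_lt (by omega)
  have z3 : i.choose (n+2) = 0 := Nat.choose_eq_zero_of_lt (by omega)
  have z4 : (i+1).choose (n+1) = 0 := Nat.choose_eq_zero_of_lt (by omega)
  rw [z1, z2, z3, z4]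
  push_cast
  ring

lemma case_eqn (n : ℕ) : Stm n n := by
  unfold Stm
  rw [show n+n+3 = 2*n+3 from by omega, show n+n+4 = 2*n+4 from by omega]
  have z3 : n.choose (n+2) = 0 := Nat.choose_eq_zero_of_lt (by omega)
  have z2 : n.choose (n+1) = 0 := Nat.choose_eq_zero_of_lt (by omega)
  rw [z3, z2, Nat.choose_self, Nat.choose_self]
  have dn1 : ((n:ℚ)+1) ≠ 0 := by positivity
  have dn2 : ((n:ℚ)+2) ≠ 0 := by positivity
  have dn3 : ((n:ℚ)+3) ≠ 0 := by positivity
  have dd2 : (2*(n:ℚ)+2) ≠ 0 := by positivity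
  have dd3 : (2*(n:ℚ)+3) ≠ 0 := by positivity
  have dd4 : (2*(n:ℚ)+4) ≠ 0 := by positivity
  have t3 : (((3*n+7).choose (2*n+4) : ℕ) : ℚ)
      = (((3*n+6).choose (2*n+4) : ℕ) : ℚ) * (3*(n:ℚ)+7)/((n:ℚ)+3) := by
    rw [eq_div_iff dn3]
    have h := cL2 (3*n+6) (2*n+4); rw [show 3*n+6+1 = 3*n+7 from by omega] at h
    push_cast at h; linear_combination h
  have t2 : (((3*n+6).choose (2*n+4) : ℕ) : ℚ)
      = (((3*n+5).choose (2*n+4) : ℕ) : ℚ) * (3*(n:ℚ)+6)/((n:ℚ)+2) := by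
    rw [eq_div_iff dn2]
    have h := cL2 (3*n+5) (2*n+4); rw [show 3*n+5+1 = 3*n+6 from by omega] at h
    push_cast at h; linear_combination h
  have t1 : (((3*n+5).choose (2*n+4) : ℕ) : ℚ)
      = (((3*n+4).choose (2*n+4) : ℕ) : ℚ) * (3*(n:ℚ)+5)/((n:ℚ)+1) := by
    rw [eq_div_iff dn1]
    have h := cL2 (3*n+4) (2*n+4); rw [show 3*n+4+1 = 3*n+5 from by omega] at h
    push_cast at h; linear_combination h
  have d3 : (((3*n+4).choose (2*n+4) : ℕ) : ℚ)
      = (((3*n+3).choose (2*n+3) : ℕ) : ℚ) * (3*(n:ℚ)+4)/(2*(n:ℚ)+4) := by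
    rw [eq_div_iff dd4]
    have h := cL3 (3*n+3) (2*n+3)
    rw [show 3*n+3+1 = 3*n+4 from by omega, show 2*n+3+1 = 2*n+4 from by omega] at h
    push_cast at h; linear_combination h
  have d2 : (((3*n+3).choose (2*n+3) : ℕ) : ℚ)
      = (((3*n+2).choose (2*n+2) : ℕ) : ℚ) * (3*(n:ℚ)+3)/(2*(n:ℚ)+3) := by
    rw [eq_div_iff dd3]
    have h := cL3 (3*n+2) (2*n+2)
    rw [show 3*n+2+1 = 3*n+3 from by omega, show 2*n+2+1 = 2*n+3 from by omega] at h
    push_cast at h; linear_combination h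
  have d1 : (((3*n+2).choose (2*n+2) : ℕ) : ℚ)
      = (((3*n+1).choose (2*n+1) : ℕ) : ℚ) * (3*(n:ℚ)+2)/(2*(n:ℚ)+2) := by
    rw [eq_div_iff dd2]
    have h := cL3 (3*n+1) (2*n+1)
    rw [show 3*n+1+1 = 3*n+2 from by omega, show 2*n+1+1 = 2*n+2 from by omega] at h
    push_cast at h; linear_combination h
  rw [t3, t2, t1, d3, d2, d1]
  unfold Qp
  field_simp
  ring
lemma case_eqn1 (n : ℕ) (hn : 1 ≤ n) : Stm n (n+1) := by
  unfold Stm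
  rw [show n+(n+1)+3 = 2*n+4 from by omega, show n+(n+1)+4 = 2*n+5 from by omega]
  have z3 : (n+1).choose (n+2) = 0 := Nat.choose_eq_zero_of_lt (by omega)
  rw [z3, Nat.choose_succ_self_right, Nat.choose_succ_self_right, Nat.choose_self]
  have hn' : (1:ℚ) ≤ (n:ℚ) := by exact_mod_cast hn
  have dn0 : ((n:ℚ)) ≠ 0 := by positivity
  have dn1 : ((n:ℚ)+1) ≠ 0 := by positivity
  have dn2 : ((n:ℚ)+2) ≠ 0 := by positivity
  have dn3 : ((n:ℚ)+3) ≠ 0 := by positivity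
  have dd3 : (2*(n:ℚ)+3) ≠ 0 := by positivity
  have dd4 : (2*(n:ℚ)+4) ≠ 0 := by positivity
  have dd5 : (2*(n:ℚ)+5) ≠ 0 := by positivity
  have q1 : (((3*n+7).choose (2*n+5) : ℕ) : ℚ)
      = (((3*n+7).choose (2*n+4) : ℕ) : ℚ) * ((n:ℚ)+3)/(2*(n:ℚ)+5) := by
    rw [eq_div_iff dd5]
    have h := cL1 (3*n+7) (2*n+4); rw [show 2*n+4+1 = 2*n+5 from by omega] at h
    push_cast at h; linear_combination h
  have q2 : (((3*n+7).choose (2*n+4) : ℕ) : ℚ)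
      = (((3*n+6).choose (2*n+4) : ℕ) : ℚ) * (3*(n:ℚ)+7)/((n:ℚ)+3) := by
    rw [eq_div_iff dn3]
    have h := cL2 (3*n+6) (2*n+4); rw [show 3*n+6+1 = 3*n+7 from by omega] at h
    push_cast at h; linear_combination h
  have q3 : (((3*n+6).choose (2*n+4) : ℕ) : ℚ)
      = (((3*n+5).choose (2*n+4) : ℕ) : ℚ) * (3*(n:ℚ)+6)/((n:ℚ)+2) := by
    rw [eq_div_iff dn2]
    have h := cL2 (3*n+5) (2*n+4); rw [show 3*n+5+1 = 3*n+6 from by omega] at h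
    push_cast at h; linear_combination h
  have q4 : (((3*n+5).choose (2*n+4) : ℕ) : ℚ)
      = (((3*n+4).choose (2*n+4) : ℕ) : ℚ) * (3*(n:ℚ)+5)/((n:ℚ)+1) := by
    rw [eq_div_iff dn1]
    have h := cL2 (3*n+4) (2*n+4); rw [show 3*n+4+1 = 3*n+5 from by omega] at h
    push_cast at h; linear_combination h
  have q5 : (((3*n+4).choose (2*n+4) : ℕ) : ℚ)
      = (((3*n+3).choose (2*n+4) : ℕ) : ℚ) * (3*(n:ℚ)+4)/((n:ℚ)) := by
    rw [eq_div_iff dn0]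
    have h := cL2 (3*n+3) (2*n+4); rw [show 3*n+3+1 = 3*n+4 from by omega] at h
    push_cast at h; linear_combination h
  have q6 : (((3*n+3).choose (2*n+4) : ℕ) : ℚ)
      = (((3*n+2).choose (2*n+3) : ℕ) : ℚ) * (3*(n:ℚ)+3)/(2*(n:ℚ)+4) := by
    rw [eq_div_iff dd4]
    have h := cL3 (3*n+2) (2*n+3)
    rw [show 3*n+2+1 = 3*n+3 from by omega, show 2*n+3+1 = 2*n+4 from by omega] at h
    push_cast at h; linear_combination h
  have q7 : (((3*n+2).choose (2*n+3) : ℕ) : ℚ)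
      = (((3*n+1).choose (2*n+2) : ℕ) : ℚ) * (3*(n:ℚ)+2)/(2*(n:ℚ)+3) := by
    rw [eq_div_iff dd3]
    have h := cL3 (3*n+1) (2*n+2)
    rw [show 3*n+1+1 = 3*n+2 from by omega, show 2*n+2+1 = 2*n+3 from by omega] at h
    push_cast at h; linear_combination h
  rw [q1, q2, q3, q4, q5, q6, q7]
  unfold Qp
  field_simp
  push_cast
  ring

lemma top_3n6 (n : ℕ) : (((3*n+7).choose (3*n+6) : ℕ) : ℚ) = 3*(n:ℚ)+7 := by
  have h := cL1 (3*n+7) (3*n+6)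
  rw [show 3*n+6+1 = 3*n+7 from by omega, Nat.choose_self] at h
  push_cast at h; linear_combination -h

lemma top_3n5 (n : ℕ) : (((3*n+7).choose (3*n+5) : ℕ) : ℚ)
    = (((3*n+7).choose (3*n+6) : ℕ) : ℚ) * (3*(n:ℚ)+6)/2 := by
  rw [eq_div_iff (by norm_num : (2:ℚ) ≠ 0)]
  have h := cL1 (3*n+7) (3*n+5)
  rw [show 3*n+5+1 = 3*n+6 from by omega] at h
  push_cast at h; linear_combination -h

lemma top_3n4 (n : ℕ) : (((3*n+7).choose (3*n+4) : ℕ) : ℚ)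
    = (((3*n+7).choose (3*n+5) : ℕ) : ℚ) * (3*(n:ℚ)+5)/3 := by
  rw [eq_div_iff (by norm_num : (3:ℚ) ≠ 0)]
  have h := cL1 (3*n+7) (3*n+4)
  rw [show 3*n+4+1 = 3*n+5 from by omega] at h
  push_cast at h; linear_combination -h

lemma top_3n3 (n : ℕ) : (((3*n+7).choose (3*n+3) : ℕ) : ℚ)
    = (((3*n+7).choose (3*n+4) : ℕ) : ℚ) * (3*(n:ℚ)+4)/4 := by
  rw [eq_div_iff (by norm_num : (4:ℚ) ≠ 0)]
  have h := cL1 (3*n+7) (3*n+3)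
  rw [show 3*n+3+1 = 3*n+4 from by omega] at h
  push_cast at h; linear_combination -h

lemma case_2n (n : ℕ) : Stm n (2*n) := by
  unfold Stm
  rw [show n+2*n+3 = 3*n+3 from by omega, show n+2*n+4 = 3*n+4 from by omega,
      show n+2*n+1 = 3*n+1 from by omega, Nat.choose_self]
  have dn1 : ((n:ℚ)+1) ≠ 0 := by positivity
  have dn2 : ((n:ℚ)+2) ≠ 0 := by positivity
  have x1 : (((2*n).choose (n+1) : ℕ) : ℚ)
      = (((2*n).choose n : ℕ) : ℚ) * ((n:ℚ))/((n:ℚ)+1) := by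
    rw [eq_div_iff dn1]
    have h := cL1 (2*n) n; push_cast at h; linear_combination h
  have x2 : (((2*n).choose (n+2) : ℕ) : ℚ)
      = (((2*n).choose (n+1) : ℕ) : ℚ) * ((n:ℚ)-1)/((n:ℚ)+2) := by
    rw [eq_div_iff dn2]
    have h := cL1 (2*n) (n+1); rw [show n+1+1 = n+2 from by omega] at h
    push_cast at h; linear_combination h
  have x3 : (((2*n+1).choose (n+1) : ℕ) : ℚ)
      = (((2*n).choose n : ℕ) : ℚ) * (2*(n:ℚ)+1)/((n:ℚ)+1) := by
    rw [eq_div_iff dn1]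
    have h := cL3 (2*n) n; push_cast at h; linear_combination h
  rw [top_3n3, top_3n4, top_3n5, top_3n6, x2, x1, x3]
  unfold Qp
  field_simp
  push_cast
  ring

lemma case_2n1 (n : ℕ) : Stm n (2*n+1) := by
  unfold Stm
  rw [show n+(2*n+1)+3 = 3*n+4 from by omega, show n+(2*n+1)+4 = 3*n+5 from by omega,
      show n+(2*n+1)+1 = 3*n+2 from by omega]
  rw [Nat.choose_eq_zero_of_lt (show 3*n+1 < 3*n+2 from by omega)]
  have dn1 : ((n:ℚ)+1) ≠ 0 := by positivity
  have dn2 : ((n:ℚ)+2) ≠ 0 := by positivity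
  have x2 : (((2*n+1).choose (n+2) : ℕ) : ℚ)
      = (((2*n+1).choose (n+1) : ℕ) : ℚ) * ((n:ℚ))/((n:ℚ)+2) := by
    rw [eq_div_iff dn2]
    have h := cL1 (2*n+1) (n+1); rw [show n+1+1 = n+2 from by omega] at h
    push_cast at h; linear_combination h
  have x3 : (((2*n+1+1).choose (n+1) : ℕ) : ℚ)
      = (((2*n+1).choose (n+1) : ℕ) : ℚ) * (2*(n:ℚ)+2)/((n:ℚ)+1) := by
    rw [eq_div_iff dn1]
    have h := cL2 (2*n+1) (n+1)
    push_cast at h; linear_combination h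
  rw [top_3n4, top_3n5, top_3n6, x2, x3]
  unfold Qp
  field_simp
  push_cast
  ring

lemma case_2n2 (n : ℕ) : Stm n (2*n+2) := by
  unfold Stm
  rw [show n+(2*n+2)+3 = 3*n+5 from by omega, show n+(2*n+2)+4 = 3*n+6 from by omega,
      show n+(2*n+2)+1 = 3*n+3 from by omega]
  rw [Nat.choose_eq_zero_of_lt (show 3*n+1 < 3*n+3 from by omega)]
  have dn2 : ((n:ℚ)+2) ≠ 0 := by positivity
  have x1 : (((2*n+2).choose (n+2) : ℕ) : ℚ)
      = (((2*n+2).choose (n+1) : ℕ) : ℚ) * ((n:ℚ)+1)/((n:ℚ)+2) := by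
    rw [eq_div_iff dn2]
    have h := cL1 (2*n+2) (n+1); rw [show n+1+1 = n+2 from by omega] at h
    push_cast at h; linear_combination h
  have x3 : (((2*n+2+1).choose (n+1) : ℕ) : ℚ)
      = (((2*n+2).choose (n+1) : ℕ) : ℚ) * (2*(n:ℚ)+3)/((n:ℚ)+2) := by
    rw [eq_div_iff dn2]
    have h := cL2 (2*n+2) (n+1)
    push_cast at h; linear_combination h
  rw [top_3n5, top_3n6, x1, x3]
  unfold Qp
  field_simp
  push_cast
  ring

lemma case_2n3 (n : ℕ) : Stm n (2*n+3) := by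
  unfold Stm
  rw [show n+(2*n+3)+3 = 3*n+6 from by omega, show n+(2*n+3)+4 = 3*n+7 from by omega,
      show n+(2*n+3)+1 = 3*n+4 from by omega]
  rw [Nat.choose_eq_zero_of_lt (show 3*n+1 < 3*n+4 from by omega), Nat.choose_self]
  have dn2 : ((n:ℚ)+2) ≠ 0 := by positivity
  have dn3 : ((n:ℚ)+3) ≠ 0 := by positivity
  have x1 : (((2*n+3).choose (n+2) : ℕ) : ℚ)
      = (((2*n+3).choose (n+1) : ℕ) : ℚ) * ((n:ℚ)+2)/((n:ℚ)+2) := by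
    rw [eq_div_iff dn2]
    have h := cL1 (2*n+3) (n+1); rw [show n+1+1 = n+2 from by omega] at h
    push_cast at h; linear_combination h
  have x3 : (((2*n+3+1).choose (n+1) : ℕ) : ℚ)
      = (((2*n+3).choose (n+1) : ℕ) : ℚ) * (2*(n:ℚ)+4)/((n:ℚ)+3) := by
    rw [eq_div_iff dn3]
    have h := cL2 (2*n+3) (n+1)
    push_cast at h; linear_combination h
  rw [top_3n6, x1, x3]
  unfold Qp
  field_simp
  push_cast
  ring

lemma case_2n4 (n : ℕ) : Stm n (2*n+4) := by
  unfold Stm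
  rw [show n+(2*n+4)+3 = 3*n+7 from by omega, show n+(2*n+4)+4 = 3*n+8 from by omega,
      show n+(2*n+4)+1 = 3*n+5 from by omega]
  rw [Nat.choose_eq_zero_of_lt (show 3*n+1 < 3*n+5 from by omega),
      Nat.choose_eq_zero_of_lt (show 3*n+7 < 3*n+8 from by omega), Nat.choose_self]
  have dn2 : ((n:ℚ)+2) ≠ 0 := by positivity
  have x1 : (((2*n+4).choose (n+2) : ℕ) : ℚ)
      = (((2*n+4).choose (n+1) : ℕ) : ℚ) * ((n:ℚ)+3)/((n:ℚ)+2) := by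
    rw [eq_div_iff dn2]
    have h := cL1 (2*n+4) (n+1); rw [show n+1+1 = n+2 from by omega] at h
    push_cast at h; linear_combination h
  rw [x1]
  unfold Qp
  field_simp
  push_cast
  ring

lemma case_gen (n i : ℕ) (hlo : n + 2 ≤ i) (hhi : i + 1 ≤ 2*n) : Stm n i := by
  unfold Stm
  have hi' : (i:ℚ) + 1 ≤ 2*(n:ℚ) := by
    have h := (Nat.cast_le (α := ℚ)).2 hhi
    push_cast at h
    linarith
  have dn1 : ((n:ℚ)+1) ≠ 0 := by positivity
  have dn2 : ((n:ℚ)+2) ≠ 0 := by positivity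
  have d3 : ((n:ℚ)+(i:ℚ)+2) ≠ 0 := by positivity
  have d4 : ((n:ℚ)+(i:ℚ)+3) ≠ 0 := by positivity
  have d5 : ((n:ℚ)+(i:ℚ)+4) ≠ 0 := by positivity
  have e1 : (2*(n:ℚ)+1-(i:ℚ)) ≠ 0 := by nlinarith
  have e2 : (2*(n:ℚ)+2-(i:ℚ)) ≠ 0 := by nlinarith
  have e3 : (2*(n:ℚ)+3-(i:ℚ)) ≠ 0 := by nlinarith
  have e4 : (2*(n:ℚ)+4-(i:ℚ)) ≠ 0 := by nlinarith
  -- chain for top with bottom n+i+4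
  have s1 : (((3*n+7).choose (n+i+4) : ℕ) : ℚ)
      = (((3*n+6).choose (n+i+4) : ℕ) : ℚ) * (3*(n:ℚ)+7)/(2*(n:ℚ)+3-(i:ℚ)) := by
    rw [eq_div_iff e3]
    have h := cL2 (3*n+6) (n+i+4)
    have e : 3*n+6+1 = 3*n+7 := by omega
    rw [e] at h; push_cast at h; linear_combination h
  have s2 : (((3*n+6).choose (n+i+4) : ℕ) : ℚ)
      = (((3*n+5).choose (n+i+4) : ℕ) : ℚ) * (3*(n:ℚ)+6)/(2*(n:ℚ)+2-(i:ℚ)) := by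
    rw [eq_div_iff e2]
    have h := cL2 (3*n+5) (n+i+4)
    have e : 3*n+5+1 = 3*n+6 := by omega
    rw [e] at h; push_cast at h; linear_combination h
  have s3 : (((3*n+5).choose (n+i+4) : ℕ) : ℚ)
      = (((3*n+4).choose (n+i+4) : ℕ) : ℚ) * (3*(n:ℚ)+5)/(2*(n:ℚ)+1-(i:ℚ)) := by
    rw [eq_div_iff e1]
    have h := cL2 (3*n+4) (n+i+4)
    have e : 3*n+4+1 = 3*n+5 := by omega
    rw [e] at h; push_cast at h; linear_combination h
  have s4 : (((3*n+4).choose (n+i+4) : ℕ) : ℚ)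
      = (((3*n+3).choose (n+i+3) : ℕ) : ℚ) * (3*(n:ℚ)+4)/((n:ℚ)+(i:ℚ)+4) := by
    rw [eq_div_iff d5]
    have h := cL3 (3*n+3) (n+i+3)
    have e : 3*n+3+1 = 3*n+4 := by omega
    have e' : n+i+3+1 = n+i+4 := by omega
    rw [e, e'] at h; push_cast at h; linear_combination h
  -- chain for top with bottom n+i+3
  have u1 : (((3*n+7).choose (n+i+3) : ℕ) : ℚ)
      = (((3*n+6).choose (n+i+3) : ℕ) : ℚ) * (3*(n:ℚ)+7)/(2*(n:ℚ)+4-(i:ℚ)) := by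
    rw [eq_div_iff e4]
    have h := cL2 (3*n+6) (n+i+3)
    have e : 3*n+6+1 = 3*n+7 := by omega
    rw [e] at h; push_cast at h; linear_combination h
  have u2 : (((3*n+6).choose (n+i+3) : ℕ) : ℚ)
      = (((3*n+5).choose (n+i+3) : ℕ) : ℚ) * (3*(n:ℚ)+6)/(2*(n:ℚ)+3-(i:ℚ)) := by
    rw [eq_div_iff e3]
    have h := cL2 (3*n+5) (n+i+3)
    have e : 3*n+5+1 = 3*n+6 := by omega
    rw [e] at h; push_cast at h; linear_combination h
  have u3 : (((3*n+5).choose (n+i+3) : ℕ) : ℚ)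
      = (((3*n+4).choose (n+i+3) : ℕ) : ℚ) * (3*(n:ℚ)+5)/(2*(n:ℚ)+2-(i:ℚ)) := by
    rw [eq_div_iff e2]
    have h := cL2 (3*n+4) (n+i+3)
    have e : 3*n+4+1 = 3*n+5 := by omega
    rw [e] at h; push_cast at h; linear_combination h
  have u4 : (((3*n+4).choose (n+i+3) : ℕ) : ℚ)
      = (((3*n+3).choose (n+i+3) : ℕ) : ℚ) * (3*(n:ℚ)+4)/(2*(n:ℚ)+1-(i:ℚ)) := by
    rw [eq_div_iff e1]
    have h := cL2 (3*n+3) (n+i+3)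
    have e : 3*n+3+1 = 3*n+4 := by omega
    rw [e] at h; push_cast at h; linear_combination h
  -- shared tail
  have v1 : (((3*n+3).choose (n+i+3) : ℕ) : ℚ)
      = (((3*n+2).choose (n+i+2) : ℕ) : ℚ) * (3*(n:ℚ)+3)/((n:ℚ)+(i:ℚ)+3) := by
    rw [eq_div_iff d4]
    have h := cL3 (3*n+2) (n+i+2)
    have e : 3*n+2+1 = 3*n+3 := by omega
    have e' : n+i+2+1 = n+i+3 := by omega
    rw [e, e'] at h; push_cast at h; linear_combination h
  have v2 : (((3*n+2).choose (n+i+2) : ℕ) : ℚ)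
      = (((3*n+1).choose (n+i+1) : ℕ) : ℚ) * (3*(n:ℚ)+2)/((n:ℚ)+(i:ℚ)+2) := by
    rw [eq_div_iff d3]
    have h := cL3 (3*n+1) (n+i+1)
    have e : 3*n+1+1 = 3*n+2 := by omega
    have e' : n+i+1+1 = n+i+2 := by omega
    rw [e, e'] at h; push_cast at h; linear_combination h
  -- lower binomials
  have w2 : ((i.choose (n+2) : ℕ) : ℚ)
      = ((i.choose (n+1) : ℕ) : ℚ) * ((i:ℚ)-(n:ℚ)-1)/((n:ℚ)+2) := by
    rw [eq_div_iff dn2]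
    have h := cL1 i (n+1)
    have e : n+1+1 = n+2 := by omega
    rw [e] at h; push_cast at h; linear_combination h
  have w1 : ((i.choose (n+1) : ℕ) : ℚ)
      = ((i.choose n : ℕ) : ℚ) * ((i:ℚ)-(n:ℚ))/((n:ℚ)+1) := by
    rw [eq_div_iff dn1]
    have h := cL1 i n
    push_cast at h; linear_combination h
  have w3 : (((i+1).choose (n+1) : ℕ) : ℚ)
      = ((i.choose n : ℕ) : ℚ) * ((i:ℚ)+1)/((n:ℚ)+1) := by
    rw [eq_div_iff dn1]
    have h := cL3 i n
    push_cast at h; linear_combination h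
  rw [s1, s2, s3, s4, u1, u2, u3, u4, v1, v2, w2, w1, w3]
  unfold Qp
  obtain ⟨k, hk⟩ : ∃ k : ℕ, 2*n = i+1+k := ⟨2*n-(i+1), by omega⟩
  have hkq : (k:ℚ) = 2*(n:ℚ)-1-(i:ℚ) := by
    have h := congrArg (fun t : ℕ => (t:ℚ)) hk
    push_cast at h
    linarith
  rw [show 2*(n:ℚ)+1-(i:ℚ) = (k:ℚ)+2 by rw [hkq]; ring,
    show 2*(n:ℚ)+2-(i:ℚ) = (k:ℚ)+3 by rw [hkq]; ring,
    show 2*(n:ℚ)+3-(i:ℚ) = (k:ℚ)+4 by rw [hkq]; ring,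
    show 2*(n:ℚ)+4-(i:ℚ) = (k:ℚ)+5 by rw [hkq]; ring]
  field_simp
  rw [hkq]
  ring


lemma ptwise (n i : ℕ) (hi : i < 2*n+5) : Stm n i := by
  by_cases h0 : i < n
  · exact case_lt n i h0
  by_cases hA : i = n
  · subst hA; exact case_eqn i
  by_cases hB : i = 2*n
  · subst hB; exact case_2n n
  by_cases hC : i = 2*n+1
  · subst hC; exact case_2n1 n
  by_cases hD : i = 2*n+2
  · subst hD; exact case_2n2 n
  by_cases hE : i = 2*n+3
  · subst hE; exact case_2n3 n
  by_cases hF : i = 2*n+4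
  · subst hF; exact case_2n4 n
  by_cases hG : i = n+1
  · subst hG
    exact case_eqn1 n (by omega)
  · have hlo : n + 2 ≤ i := by omega
    have hhi : i + 1 ≤ 2*n := by omega
    exact case_gen n i hlo hhi


lemma f1_cast (n : ℕ) : (f1 n : ℚ)
    = ∑ i ∈ range (2*n+5), (((3*n+1).choose (n+i+1) : ℕ) : ℚ) * ((i.choose n : ℕ) : ℚ) := by
  rw [f1]
  push_cast
  apply Finset.sum_subset
  · intro x hx
    simp only [Finset.mem_Icc] at hx
    simp only [Finset.mem_range]
    omega
  · intro x hx hnx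
    simp only [Finset.mem_Icc, not_and, not_le] at hnx
    simp only [Finset.mem_range] at hx
    rcases Nat.lt_or_ge x n with h | h
    · rw [Nat.choose_eq_zero_of_lt h]; push_cast; ring
    · rw [Nat.choose_eq_zero_of_lt (show 3*n+1 < n+x+1 by omega)]; push_cast; ring

lemma f1_cast2 (n : ℕ) : (f1 (n+2) : ℚ)
    = ∑ i ∈ range (2*n+5), (((3*n+7).choose (n+i+3) : ℕ) : ℚ) * ((i.choose (n+2) : ℕ) : ℚ) := by
  have h1 : f1 (n+2) = ∑ i ∈ Finset.Icc (n+2) (2*n+4), (3*n+7).choose (n+i+3) * i.choose (n+2) := by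
    rw [f1, show 2*(n+2) = 2*n+4 from by omega]
    apply Finset.sum_congr rfl
    intro i _
    rw [show 3*(n+2)+1 = 3*n+7 from by omega, show (n+2)+i+1 = n+i+3 from by omega]
  rw [h1]
  push_cast
  apply Finset.sum_subset
  · intro x hx
    simp only [Finset.mem_Icc] at hx
    simp only [Finset.mem_range]
    omega
  · intro x hx hnx
    simp only [Finset.mem_Icc, not_and, not_le] at hnx
    simp only [Finset.mem_range] at hx
    rcases Nat.lt_or_ge x (n+2) with h | h
    · rw [Nat.choose_eq_zero_of_lt h]; push_cast; ring
    · rw [Nat.choose_eq_zero_of_lt (show 3*n+7 < n+x+3 by omega)]; push_cast; ring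

/-- the certificate sequence -/
noncomputable def Hc (n i : ℕ) : ℚ :=
  Qp (n:ℚ) (i:ℚ) * (((3*n+7).choose (n+i+3) : ℕ) : ℚ) * ((i.choose (n+1) : ℕ) : ℚ)

lemma rec1 (n : ℕ) : ((n:ℚ)+1)*((n:ℚ)+2)^2*(f1 (n+2) : ℚ)
    = 4*(3*(n:ℚ)+2)*(3*(n:ℚ)+4)*(3*(n:ℚ)+6)*(f1 n : ℚ) := by
  have key : ∑ i ∈ range (2*n+5),
      (3*(3*(n:ℚ)+5)*(3*(n:ℚ)+7)*
        (((n:ℚ)+1)*((n:ℚ)+2)^2*(((3*n+7).choose (n+i+3) : ℕ) : ℚ)*((i.choose (n+2) : ℕ) : ℚ)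
         - 4*(3*(n:ℚ)+2)*(3*(n:ℚ)+4)*(3*(n:ℚ)+6)*(((3*n+1).choose (n+i+1) : ℕ) : ℚ)*((i.choose n : ℕ) : ℚ)))
      = ∑ i ∈ range (2*n+5), (Hc n (i+1) - Hc n i) := by
    apply Finset.sum_congr rfl
    intro i hi
    have h := ptwise n i (Finset.mem_range.mp hi)
    unfold Stm at h
    unfold Hc
    rw [show n+(i+1)+3 = n+i+4 from by omega]
    push_cast at h ⊢
    linear_combination h
  rw [Finset.sum_range_sub (Hc n)] at key
  have hz1 : Hc n (2*n+5) = 0 := by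
    unfold Hc
    rw [Nat.choose_eq_zero_of_lt (show 3*n+7 < n+(2*n+5)+3 by omega)]
    push_cast; ring
  have hz2 : Hc n 0 = 0 := by
    unfold Hc
    rw [Nat.choose_eq_zero_of_lt (show 0 < n+1 by omega)]
    push_cast; ring
  rw [hz1, hz2, sub_zero] at key
  have expand : ∑ i ∈ range (2*n+5),
      (3*(3*(n:ℚ)+5)*(3*(n:ℚ)+7)*
        (((n:ℚ)+1)*((n:ℚ)+2)^2*(((3*n+7).choose (n+i+3) : ℕ) : ℚ)*((i.choose (n+2) : ℕ) : ℚ)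
         - 4*(3*(n:ℚ)+2)*(3*(n:ℚ)+4)*(3*(n:ℚ)+6)*(((3*n+1).choose (n+i+1) : ℕ) : ℚ)*((i.choose n : ℕ) : ℚ)))
      = 3*(3*(n:ℚ)+5)*(3*(n:ℚ)+7)*
        (((n:ℚ)+1)*((n:ℚ)+2)^2*(f1 (n+2) : ℚ)
         - 4*(3*(n:ℚ)+2)*(3*(n:ℚ)+4)*(3*(n:ℚ)+6)*(f1 n : ℚ)) := by
    rw [f1_cast2, f1_cast, Finset.mul_sum, Finset.mul_sum, ← Finset.sum_sub_distrib,
        ← Finset.mul_sum]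
    congr 1
    apply Finset.sum_congr rfl
    intro i _
    ring
  rw [expand] at key
  have hα : (3*(3*(n:ℚ)+5)*(3*(n:ℚ)+7)) ≠ 0 := by positivity
  have := mul_eq_zero.mp key
  rcases this with h | h
  · exact absurd h hα
  · linarith [h]

lemma prod_shift (c : ℚ) (m : ℕ) :
    ∏ j ∈ range (m+3), (c+3 - (j:ℚ)) = (c+3)*(c+2)*(c+1)*∏ j ∈ range m, (c - (j:ℚ)) := by
  induction m with
  | zero => simp [Finset.prod_range_succ]; ring
  | succ k ih =>
      rw [show k+1+3 = (k+3)+1 from rfl, Finset.prod_range_succ, ih, Finset.prod_range_succ]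
      push_cast
      ring

lemma qrecR (n : ℕ) :
    ((n:ℚ)+1)*((n:ℚ)+2)^2 * ((2:ℚ)^(2*(n+2)) * qchoose (3*((n:ℚ)+2)/2) (n+2))
    = 4*(3*(n:ℚ)+2)*(3*(n:ℚ)+4)*(3*(n:ℚ)+6) * ((2:ℚ)^(2*n) * qchoose (3*(n:ℚ)/2) n) := by
  rcases n with _ | m
  · simp only [qchoose]
    norm_num [Finset.prod_range_succ]
  · have hn : (m:ℚ) + 1 = ((m+1 : ℕ) : ℚ) := by push_cast; ring
    unfold qchoose
    have e1 : ∏ j ∈ range (m+1+2), (3*(((m+1:ℕ):ℚ)+2)/2 - (j:ℚ))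
        = ∏ j ∈ range (m+3), ((3*((m+1:ℕ):ℚ)/2)+3 - (j:ℚ)) := by
      apply Finset.prod_congr rfl
      intro j _
      push_cast
      ring
    rw [show m+1+2 = m+3 from rfl] at e1 ⊢
    rw [e1, prod_shift (3*((m+1:ℕ):ℚ)/2) m]
    rw [show m+1 = m+1 from rfl, Finset.prod_range_succ]
    have hf : ((m+3).factorial : ℚ) = ((m+3):ℚ) * ((m+2):ℚ) * ((m+1).factorial : ℚ) := by
      rw [show m+3 = (m+2)+1 from rfl, Nat.factorial_succ, show m+2 = (m+1)+1 from rfl,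
          Nat.factorial_succ]
      push_cast
      ring
    rw [hf]
    have hfn : ((m+1).factorial : ℚ) ≠ 0 := by positivity
    have h2 : ((m:ℚ)+3) ≠ 0 := by positivity
    have h3 : ((m:ℚ)+2) ≠ 0 := by positivity
    push_cast
    field_simp
    ring

lemma base0 : (f1 0 : ℚ) = 2 ^ (2*0) * qchoose (3 * (0:ℕ) / 2) 0 := by
  have h1 : f1 0 = 1 := by decide
  rw [h1]
  simp [qchoose]

lemma base1 : (f1 1 : ℚ) = 2 ^ (2*1) * qchoose (3 * ((1:ℕ):ℚ) / 2) 1 := by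
  have h1 : f1 1 = 6 := by decide
  rw [h1]
  simp [qchoose, Finset.prod_range_succ]
  norm_num

theorem f1_eq (n : ℕ) :
    (f1 n : ℚ) = 2 ^ (2 * n) * qchoose (3 * n / 2) n := by
  induction n using Nat.twoStepInduction with
  | zero => exact base0
  | one => exact base1
  | more m ih _ =>
      have hq := qrecR m
      have hr := rec1 m
      have hne : ((m:ℚ)+1)*((m:ℚ)+2)^2 ≠ 0 := by positivity
      have goal' : ((m:ℚ)+1)*((m:ℚ)+2)^2 * (f1 (m+2) : ℚ)
          = ((m:ℚ)+1)*((m:ℚ)+2)^2 * (2 ^ (2*(m+2)) * qchoose (3 * ((m+2:ℕ):ℚ) / 2) (m+2)) := by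
        rw [hr, ih]
        rw [show ((m+2:ℕ):ℚ) = (m:ℚ)+2 from by push_cast; ring] at *
        linear_combination -hq
      exact mul_left_cancel₀ hne goal'
end

section
/- For every integer n ≥ 0, f_5(n) = 2^{2n}·C(3n/2 - 1/2, n), where C(3n/2 - 1/2, n) is the generalized binomial coefficient with rational upper argument (3n-1)/2. -/
open Finset

/-- `f₅(n) = Σ_{i=n-1}^{2n-1} C(3n, n+i+1)·C(i, n-1)` for `n ≥ 1`, with `f₅(0) = 1`. -/
def f5 (n : ℕ) : ℕ :=
  if n = 0 then 1
  else ∑ i ∈ Finset.Icc (n - 1) (2 * n - 1), (3 * n).choose (n + i + 1) * i.choose (n - 1)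

def Tq (n j : ℕ) : ℚ :=
  ((3*n).choose j : ℚ) * (((2*n-1-j).choose (n-1) : ℕ) : ℚ)

def Xp (n j : ℚ) : ℚ :=
  j * (n * (2880 - 106752*n - 1152048*n^2 - 4700496*n^3 - 10437312*n^4 - 14221272*n^5 - 12459288*n^6 - 7061472*n^7 - 2506896*n^8 - 507384*n^9 - 44712*n^10))
  + j^2 * (-1440 + 49056*n + 780432*n^2 + 4285428*n^3 + 12132384*n^4 + 20270220*n^5 + 21151644*n^6 + 13963428*n^7 + 5673456*n^8 + 1295676*n^9 + 127332*n^10)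
  + j^3 * (2160 - 100764*n - 1128906*n^2 - 4754202*n^3 - 10543620*n^4 - 13745376*n^5 - 10910010*n^6 - 5188770*n^7 - 1359720*n^8 - 150984*n^9)
  + j^4 * (-720 + 80658*n + 712449*n^2 + 2422062*n^3 + 4271316*n^4 + 4285032*n^5 + 2468043*n^6 + 760536*n^7 + 97200*n^8)
  + j^5 * (n * (-31890 - 233034*n - 643710*n^2 - 886092*n^3 - 651102*n^4 - 244458*n^5 - 36882*n^6))
  + j^6 * (n * (6480 + 40953*n + 90864*n^2 + 93030*n^3 + 44928*n^4 + 8289*n^5))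
  + j^7 * (n * (-690 - 3744*n - 6348*n^2 - 4320*n^3 - 1026*n^4))
  + j^8 * (n * (30 + 138*n + 162*n^2 + 54*n^3))

noncomputable def Gq (n j : ℕ) : ℚ :=
  Xp n j * ((3*n).factorial : ℚ) * ((2*n-1-j).factorial : ℚ) /
    ((j.factorial : ℚ) * ((3*n+6-j).factorial : ℚ) * ((n-1).factorial : ℚ)
      * ((n+2-j).factorial : ℚ))

lemma fac_add (m k : ℕ) :
    (((m+k).factorial : ℕ) : ℚ) = (m.factorial : ℚ) * ∏ s ∈ range k, ((m:ℚ)+s+1) := by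
  induction k with
  | zero => simp
  | succ k ih =>
    rw [show m+(k+1) = (m+k)+1 from rfl, Nat.factorial_succ, prod_range_succ, ← mul_assoc,
      Nat.cast_mul, ih]
    push_cast
    ring


set_option maxHeartbeats 4000000 in
lemma cert {n j : ℕ} (hn : 3 ≤ n) (hj : j ≤ n) :
    (n:ℚ)*((n:ℚ)+1)^2*((n:ℚ)+2) * Tq (n+2) j
      - 4*(n:ℚ)*(3*(n:ℚ)+1)*(3*(n:ℚ)+3)*(3*(n:ℚ)+5) * Tq n j
    = Gq n (j+1) - Gq n j := by
  have e1 : ((3*n - j : ℕ) : ℚ) = 3*(n:ℚ) - j := by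
    push_cast [Nat.cast_sub (show j ≤ 3*n by omega)]; ring
  have e2 : ((2*n - 2 - j : ℕ) : ℚ) = 2*(n:ℚ) - 2 - j := by
    rw [Nat.cast_sub (show j ≤ 2*n-2 by omega), Nat.cast_sub (show 2 ≤ 2*n by omega)]
    push_cast; ring
  have e3 : ((n - j : ℕ) : ℚ) = (n:ℚ) - j := by
    rw [Nat.cast_sub hj]
  have e4 : ((n - 1 : ℕ) : ℚ) = (n:ℚ) - 1 := by
    rw [Nat.cast_sub (by omega)]; push_cast; ring
  unfold Tq Gq
  rw [show 3*(n+2) = 3*n+6 from by ring,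
      show 2*(n+2)-1-j = (2*n-2-j)+5 from by omega,
      show (n+2)-1 = n+1 from by omega]
  rw [Nat.cast_choose ℚ (show j ≤ 3*n+6 by omega),
      Nat.cast_choose ℚ (show n+1 ≤ (2*n-2-j)+5 by omega),
      Nat.cast_choose ℚ (show j ≤ 3*n by omega),
      Nat.cast_choose ℚ (show n-1 ≤ 2*n-1-j by omega)]
  rw [show (2*n-2-j)+5 - (n+1) = (n-j)+2 from by omega,
      show 2*n-1-j - (n-1) = n-j from by omega,
      show 2*n-1-j = (2*n-2-j)+1 from by omega,
      show 2*n-1-(j+1) = 2*n-2-j from by omega,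
      show 3*n+6-(j+1) = (3*n-j)+5 from by omega,
      show 3*n+6-j = (3*n-j)+6 from by omega,
      show n+2-(j+1) = (n-j)+1 from by omega,
      show n+2-j = (n-j)+2 from by omega,
      show n+1 = (n-1)+2 from by omega]
  have f1 : ((j.factorial : ℕ) : ℚ) ≠ 0 := by positivity
  have f2 : (((j+1).factorial : ℕ) : ℚ) ≠ 0 := by positivity
  have f3 : (((3*n-j).factorial : ℕ) : ℚ) ≠ 0 := by positivity
  have f4 : ((((3*n-j)+5).factorial : ℕ) : ℚ) ≠ 0 := by positivity
  have f5 : ((((3*n-j)+6).factorial : ℕ) : ℚ) ≠ 0 := by positivity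
  have f6 : (((n-1).factorial : ℕ) : ℚ) ≠ 0 := by positivity
  have f7 : ((((n-1)+2).factorial : ℕ) : ℚ) ≠ 0 := by positivity
  have f8 : (((n-j).factorial : ℕ) : ℚ) ≠ 0 := by positivity
  have f9 : ((((n-j)+1).factorial : ℕ) : ℚ) ≠ 0 := by positivity
  have f10 : ((((n-j)+2).factorial : ℕ) : ℚ) ≠ 0 := by positivity
  field_simp
  rw [fac_add (3*n) 6, fac_add (3*n-j) 6, fac_add (3*n-j) 5, fac_add (2*n-2-j) 5,
      fac_add (2*n-2-j) 1, fac_add (n-j) 2, fac_add (n-j) 1, fac_add (n-1) 2, fac_add j 1]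
  simp only [prod_range_succ, prod_range_zero, e1, e2, e3, e4, Xp]
  push_cast
  ring

lemma bnd {n : ℕ} (hn : 3 ≤ n) :
    Gq n (n+1) = -((n:ℚ)*((n:ℚ)+1)^2*((n:ℚ)+2)) * (Tq (n+2) (n+1) + Tq (n+2) (n+2)) := by
  have e1 : ((n - 2 : ℕ) : ℚ) = (n:ℚ) - 2 := by
    rw [Nat.cast_sub (by omega)]; push_cast; ring
  unfold Tq Gq
  rw [show 3*(n+2) = 3*n+6 from by ring,
      show 2*(n+2)-1-(n+1) = n+2 from by omega,
      show 2*(n+2)-1-(n+2) = n+1 from by omega,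
      show (n+2)-1 = n+1 from by omega]
  rw [Nat.cast_choose ℚ (show n+1 ≤ 3*n+6 by omega),
      Nat.cast_choose ℚ (show n+2 ≤ 3*n+6 by omega),
      Nat.cast_choose ℚ (show n+1 ≤ n+2 by omega),
      Nat.choose_self]
  rw [show 2*n-1-(n+1) = n-2 from by omega,
      show 3*n+6-(n+1) = (2*n+4)+1 from by omega,
      show 3*n+6-(n+2) = 2*n+4 from by omega,
      show n+2-(n+1) = 1 from by omega,
      show n+1 = (n-2)+3 from by omega,
      show n-1 = (n-2)+1 from by omega,
      show n+2 = (n-2)+4 from by omega,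
      show 3*n+6 = (3*n)+6 from by ring]
  have f1 : (((3*n)+6).factorial : ℚ) ≠ 0 := by positivity
  have f2 : ((((2*n+4)+1).factorial : ℕ) : ℚ) ≠ 0 := by positivity
  have f3 : ((((n-2)+3).factorial : ℕ) : ℚ) ≠ 0 := by positivity
  have f4 : ((((n-2)+4).factorial : ℕ) : ℚ) ≠ 0 := by positivity
  have f5 : ((((n-2)+1).factorial : ℕ) : ℚ) ≠ 0 := by positivity
  have f6 : ((((2*n+4)).factorial : ℕ) : ℚ) ≠ 0 := by positivity
  have f7 : ((Nat.factorial 1 : ℕ) : ℚ) ≠ 0 := by positivity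
  field_simp
  rw [fac_add (3*n) 6, fac_add (2*n+4) 1, fac_add (n-2) 3, fac_add (n-2) 1, fac_add (n-2) 4]
  simp only [prod_range_succ, prod_range_zero, e1, Nat.factorial_one, Nat.cast_one, Xp]
  push_cast [e1]
  ring

noncomputable def Sq (n : ℕ) : ℚ := ∑ j ∈ range (n+1), Tq n j

lemma Sq_rec {n : ℕ} (hn : 3 ≤ n) :
    (n:ℚ)*((n:ℚ)+1)^2*((n:ℚ)+2) * Sq (n+2)
      = 4*(n:ℚ)*(3*(n:ℚ)+1)*(3*(n:ℚ)+3)*(3*(n:ℚ)+5) * Sq n := by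
  have tele : ∑ j ∈ range (n+1), (Gq n (j+1) - Gq n j) = Gq n (n+1) - Gq n 0 :=
    Finset.sum_range_sub (Gq n) (n+1)
  have hG0 : Gq n 0 = 0 := by
    simp [Gq, Xp]
  have hsum : ∑ j ∈ range (n+1),
      ((n:ℚ)*((n:ℚ)+1)^2*((n:ℚ)+2) * Tq (n+2) j
        - 4*(n:ℚ)*(3*(n:ℚ)+1)*(3*(n:ℚ)+3)*(3*(n:ℚ)+5) * Tq n j)
      = Gq n (n+1) - Gq n 0 := by
    rw [← tele]
    exact Finset.sum_congr rfl fun j hj => cert hn (Nat.lt_succ_iff.mp (mem_range.mp hj))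
  rw [Finset.sum_sub_distrib, ← Finset.mul_sum, ← Finset.mul_sum, hG0, sub_zero, bnd hn] at hsum
  have hs2 : Sq (n+2) = (∑ j ∈ range (n+1), Tq (n+2) j) + Tq (n+2) (n+1) + Tq (n+2) (n+2) := by
    rw [Sq, show n+2+1 = (n+1)+1+1 from rfl, Finset.sum_range_succ, Finset.sum_range_succ]
  rw [hs2, Sq]
  linear_combination hsum

lemma f5_eq_Sq {n : ℕ} (hn : 1 ≤ n) : (f5 n : ℚ) = Sq n := by
  have hn0 : n ≠ 0 := by omega
  rw [f5, if_neg hn0, Nat.cast_sum]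
  rw [show Finset.Icc (n-1) (2*n-1) = Finset.Ico (n-1) (2*n-1+1) from (Finset.Ico_add_one_right_eq_Icc ..).symm,
      show 2*n-1+1 = 2*n from by omega, Finset.sum_Ico_eq_sum_range,
      show 2*n - (n-1) = n+1 from by omega]
  rw [Sq, ← Finset.sum_range_reflect (fun j => Tq n j) (n+1)]
  apply Finset.sum_congr rfl
  intro k hk
  have hk' : k ≤ n := by
    have := mem_range.mp hk; omega
  rw [show n+1-1-k = n-k from by omega, Tq,
      show n + (n-1+k) + 1 = 2*n+k from by omega,
      show 2*n-1-(n-k) = n-1+k from by omega,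
      show (3*n).choose (n-k) = (3*n).choose (2*n+k) from by
        rw [← Nat.choose_symm (show 2*n+k ≤ 3*n by omega), show 3*n - (2*n+k) = n-k from by omega]]
  push_cast
  ring

lemma prod_shift3 (q : ℚ) (m : ℕ) :
    ∏ j ∈ range (m+3), (q+3 - (j:ℚ)) = (q+3)*(q+2)*(q+1) * ∏ j ∈ range m, (q - (j:ℚ)) := by
  rw [prod_range_succ', prod_range_succ', prod_range_succ']
  have : ∀ j : ℕ, q + 3 - ((j+1+1+1 : ℕ):ℚ) = q - j := by
    intro j; push_cast; ring
  simp only [this]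
  push_cast
  ring

lemma rhs_rec (m : ℕ) :
    (↑(m+1):ℚ)*((↑(m+1):ℚ)+1)^2*((↑(m+1):ℚ)+2)
        * (2^(2*(m+1+2)) * qchoose (3 * (↑(m+1+2):ℚ) / 2 - 1/2) (m+1+2))
      = 4*(↑(m+1):ℚ)*(3*(↑(m+1):ℚ)+1)*(3*(↑(m+1):ℚ)+3)*(3*(↑(m+1):ℚ)+5)
        * (2^(2*(m+1)) * qchoose (3 * (↑(m+1):ℚ) / 2 - 1/2) (m+1)) := by
  have hq3 : (3 * (↑(m+1+2):ℚ) / 2 - 1/2) = (3 * (↑(m+1):ℚ) / 2 - 1/2) + 3 := by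
    push_cast; ring
  rw [qchoose, qchoose, hq3, show m+1+2 = m+3 from by omega, prod_shift3,
      show m+1 = m.succ from rfl, prod_range_succ]
  have hfac : (((m+3).factorial : ℕ) : ℚ) = (m+3)*(m+2)*((m+1).factorial : ℚ) := by
    rw [show m+3 = (m+2)+1 from rfl, Nat.factorial_succ, show m+2 = (m+1)+1 from rfl,
      Nat.factorial_succ]
    push_cast; ring
  rw [hfac]
  have f1 : (((m+1).factorial : ℕ) : ℚ) ≠ 0 := by positivity
  have h2 : ((m:ℚ)+3)*((m:ℚ)+2) ≠ 0 := by positivity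
  field_simp
  push_cast [Nat.succ_eq_add_one]
  ring


theorem f5_eq (n : ℕ) :
    (f5 n : ℚ) = 2 ^ (2 * n) * qchoose (3 * n / 2 - 1 / 2) n := by
  induction n using Nat.strong_induction_on with
  | _ n ih =>
    by_cases h : n ≤ 4
    · interval_cases n
      · simp [f5, qchoose]
      · have h1 : f5 1 = 4 := by decide
        rw [h1, qchoose]; norm_num [prod_range_succ, Nat.factorial]
      · have h1 : f5 2 = 30 := by decide
        rw [h1, qchoose]; norm_num [prod_range_succ, Nat.factorial]
      · have h1 : f5 3 = 256 := by decide
        rw [h1, qchoose]; norm_num [prod_range_succ, Nat.factorial]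
      · have h1 : f5 4 = 2310 := by decide
        rw [h1, qchoose]; norm_num [prod_range_succ, Nat.factorial]
    · push_neg at h
      obtain ⟨m, rfl⟩ : ∃ m, n = m+1+2 := ⟨n-3, by omega⟩
      have hm : 3 ≤ m+1 := by omega
      have hf2 : (f5 (m+1+2) : ℚ) = Sq (m+1+2) := f5_eq_Sq (by omega)
      have hf : (f5 (m+1) : ℚ) = Sq (m+1) := f5_eq_Sq (by omega)
      have ihm := ih (m+1) (by omega)
      have hA : (↑(m+1):ℚ)*((↑(m+1):ℚ)+1)^2*((↑(m+1):ℚ)+2) ≠ 0 := by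
        have : ((m+1:ℕ):ℚ) ≠ 0 := Nat.cast_ne_zero.mpr (by omega)
        push_cast at this ⊢
        positivity
      have key : (↑(m+1):ℚ)*((↑(m+1):ℚ)+1)^2*((↑(m+1):ℚ)+2) * Sq (m+1+2)
          = (↑(m+1):ℚ)*((↑(m+1):ℚ)+1)^2*((↑(m+1):ℚ)+2)
            * (2 ^ (2*(m+1+2)) * qchoose (3 * (↑(m+1+2):ℚ) / 2 - 1/2) (m+1+2)) := by
        rw [Sq_rec hm, ← hf, ihm, rhs_rec m]
      rw [hf2, mul_left_cancel₀ hA key]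
end

section
/- Let α be the unique formal power series over ℚ with constant term 0 satisfying α·(1-α)·(1-2α) = X. Then in ℚ[[X]] one has (1 - 6α + 6α²)·Σ_{n≥0} f_1(n)·X^n = 1. -/
open PowerSeries Finset

noncomputable section

namespace F1Dev

lemma key_cancel (w : ℚ⟦X⟧) (hw0 : constantCoeff w ≠ 0) (s : ℕ) :
    (coeff (s+1)) ((w + X * d⁄dX ℚ w) * (w⁻¹) ^ (s + 2)) = 0 := by
  have hwinv : w * w⁻¹ = 1 := PowerSeries.mul_inv_cancel w hw0
  set v := w⁻¹ with hv
  have h1 : w * v ^ (s+2) = v ^ (s+1) := by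
    rw [pow_succ' v (s+1), ← mul_assoc, hwinv, one_mul]
  have hDv : d⁄dX ℚ v = -v^2 * d⁄dX ℚ w := PowerSeries.derivative_inv' w
  have hD : d⁄dX ℚ (v ^ (s+1)) = C (-((s:ℚ)+1)) * (v ^ (s+2) * d⁄dX ℚ w) := by
    rw [Derivation.leibniz_pow, hDv]
    simp only [smul_eq_mul, nsmul_eq_mul, map_neg, map_add, map_natCast, map_one,
      Nat.add_sub_cancel]
    push_cast
    ring
  have hc0 : (coeff s) (d⁄dX ℚ (v ^ (s+1)))
      = (coeff (s+1)) (v^(s+1)) * ((s:ℚ)+1) := by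
    rw [PowerSeries.coeff_derivative]
  have hc1 : (coeff s) (v ^ (s+2) * d⁄dX ℚ w) = - (coeff (s+1)) (v^(s+1)) := by
    have h2 := congrArg (coeff s) hD
    rw [coeff_C_mul, hc0] at h2
    have hs : ((s:ℚ)+1) ≠ 0 := by positivity
    have h3 : ((coeff s) (v ^ (s + 2) * d⁄dX ℚ w) + (coeff (s+1)) (v^(s+1)))
        * ((s:ℚ)+1) = 0 * ((s:ℚ)+1) := by linear_combination h2
    have h4 := mul_right_cancel₀ hs h3
    linarith
  rw [add_mul, map_add, h1, mul_assoc, coeff_succ_X_mul, mul_comm (d⁄dX ℚ w), hc1]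
  ring


lemma mono (w : ℚ⟦X⟧) (hw : constantCoeff w = 1) (N d : ℕ) (hd : d ≤ N) :
    coeff N ((X*w)^d * (d⁄dX ℚ (X*w)) * (w⁻¹)^(N+1)) = if d = N then 1 else 0 := by
  have hw0 : constantCoeff w ≠ 0 := by rw [hw]; norm_num
  have hwinv : w * w⁻¹ = 1 := PowerSeries.mul_inv_cancel w hw0
  have hD : d⁄dX ℚ (X*w) = w + X * d⁄dX ℚ w := by
    rw [Derivation.leibniz]
    simp only [smul_eq_mul, PowerSeries.derivative_X, mul_one]
    ring
  rw [hD, mul_pow, mul_assoc, mul_assoc, coeff_X_pow_mul']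
  rcases eq_or_lt_of_le hd with rfl | hlt
  · rw [if_pos le_rfl, if_pos rfl, Nat.sub_self]
    rw [coeff_zero_eq_constantCoeff]
    simp only [map_mul, map_pow, map_add, hw, constantCoeff_X, PowerSeries.constantCoeff_inv,
      constantCoeff_one, zero_mul, add_zero, one_pow, mul_one, one_mul, inv_one]
  · rw [if_pos hd, if_neg (Nat.ne_of_lt hlt)]
    obtain ⟨s, hs⟩ : ∃ s, N - d = s + 1 := ⟨N - d - 1, by omega⟩
    rw [hs]
    have hre : w ^ d * ((w + X * d⁄dX ℚ w) * w⁻¹ ^ (N + 1))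
        = (w * w⁻¹)^d * ((w + X * d⁄dX ℚ w) * w⁻¹ ^ (s + 2)) := by
      rw [mul_pow]
      have : N + 1 = d + (s + 2) := by omega
      rw [this, pow_add]
      ring
    rw [hre, hwinv, one_pow, one_mul, key_cancel w hw0 s]


lemma master (w : ℚ⟦X⟧) (hw : constantCoeff w = 1) (N : ℕ) :
    coeff N ((((1 - X*w) * (1 - PowerSeries.C 2 * (X*w)))⁻¹)^(N+1)
        * (d⁄dX ℚ (X*w)) * (w⁻¹)^(N+1))
      = coeff N ((((1 - X) * (1 - PowerSeries.C 2 * X) : ℚ⟦X⟧))⁻¹^(N+1)) := by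
  have hγ0 : constantCoeff (X*w) = 0 := by simp
  set γ := X * w with hγdef
  set u : ℚ⟦X⟧ := (1 - γ) * (1 - PowerSeries.C 2 * γ) with hudef
  have hu : constantCoeff u = 1 := by simp [hudef, hγ0]
  have hu0 : constantCoeff u ≠ 0 := by rw [hu]; norm_num
  set Qs : ℚ⟦X⟧ := (1 - X) * (1 - PowerSeries.C 2 * X) with hQsdef
  have hQ : constantCoeff Qs = 1 := by simp [hQsdef]
  have hQ0 : constantCoeff Qs ≠ 0 := by rw [hQ]; norm_num
  set F : ℚ⟦X⟧ := Qs⁻¹ ^ (N+1) with hFdef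
  have hF : F * Qs^(N+1) = 1 := by
    rw [hFdef, ← mul_pow, PowerSeries.inv_mul_cancel Qs hQ0, one_pow]
  set q : Polynomial ℚ := (1 - Polynomial.X) * (1 - Polynomial.C 2 * Polynomial.X) with hqdef
  have hqcoe : (q : ℚ⟦X⟧) = Qs := by
    push_cast [hqdef, hQsdef]
    norm_num
  set p : Polynomial ℚ := trunc (N+1) F with hpdef
  have hple : ∀ j, j ≤ N → coeff j (p : ℚ⟦X⟧) = coeff j F := by
    intro j hj
    rw [Polynomial.coeff_coe, hpdef, coeff_trunc, if_pos (by omega)]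
  have stepA : ∀ j, j ≤ N → coeff j ((p:ℚ⟦X⟧) * Qs^(N+1)) = coeff j (1:ℚ⟦X⟧) := by
    intro j hj
    rw [← hF, coeff_mul, coeff_mul]
    refine Finset.sum_congr rfl fun x hx => ?_
    rw [Finset.HasAntidiagonal.mem_antidiagonal] at hx
    rw [hple x.1 (by omega)]
  have hdvd : (Polynomial.X : Polynomial ℚ)^(N+1) ∣ (p * q^(N+1) - 1) := by
    rw [Polynomial.X_pow_dvd_iff]
    intro d hdlt
    have : (coeff d) (((p * q^(N+1) - 1 : Polynomial ℚ) : ℚ⟦X⟧)) = 0 := by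
      push_cast [hqcoe]
      rw [map_sub, stepA d (by omega)]
      simp
    rwa [Polynomial.coeff_coe] at this
  obtain ⟨r, hr⟩ := hdvd
  -- apply aeval γ
  have hq : Polynomial.aeval γ q = u := by
    simp only [hqdef, hudef, map_mul, map_sub, map_one, Polynomial.aeval_X, Polynomial.aeval_C,
      ← PowerSeries.C_eq_algebraMap]
  have hC : Polynomial.aeval γ p * u^(N+1) - 1 = γ^(N+1) * Polynomial.aeval γ r := by
    have := congrArg (Polynomial.aeval γ) hr
    simpa [hq] using this
  have hud : u^(N+1) * (u⁻¹)^(N+1) = 1 := by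
    rw [← mul_pow, PowerSeries.mul_inv_cancel u hu0, one_pow]
  have hE : (u⁻¹)^(N+1)
      = Polynomial.aeval γ p - γ^(N+1) * (Polynomial.aeval γ r * (u⁻¹)^(N+1)) := by
    have h5 : Polynomial.aeval γ p * (u^(N+1) * (u⁻¹)^(N+1))
        = (1 + γ^(N+1) * Polynomial.aeval γ r) * (u⁻¹)^(N+1) := by
      rw [← mul_assoc]
      linear_combination ((u⁻¹)^(N+1)) * hC
    rw [hud, mul_one] at h5
    linear_combination -h5
  have hsum : Polynomial.aeval γ p = ∑ i ∈ Finset.range (N+1), coeff i F • γ^i := by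
    rw [Polynomial.aeval_eq_sum_range' (natDegree_trunc_lt F N)]
    refine Finset.sum_congr rfl fun i hi => ?_
    rw [Finset.mem_range] at hi
    rw [coeff_trunc, if_pos hi]
  rw [hE, hsum]
  rw [sub_mul, sub_mul, map_sub, Finset.sum_mul, Finset.sum_mul, map_sum]
  have htail : coeff N (γ ^ (N + 1) * (Polynomial.aeval γ r * (u⁻¹)^(N+1))
      * d⁄dX ℚ γ * (w⁻¹)^(N+1)) = 0 := by
    have : γ ^ (N + 1) * (Polynomial.aeval γ r * (u⁻¹)^(N+1)) * d⁄dX ℚ γ * (w⁻¹)^(N+1)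
        = X^(N+1) * (w^(N+1) * (Polynomial.aeval γ r * (u⁻¹)^(N+1)) * d⁄dX ℚ γ * (w⁻¹)^(N+1)) := by
      rw [hγdef, mul_pow]; ring
    rw [this, coeff_X_pow_mul', if_neg (by omega)]
  rw [htail, sub_zero]
  have hterm : ∀ i ∈ Finset.range (N+1),
      coeff N (coeff i F • γ^i * d⁄dX ℚ γ * (w⁻¹)^(N+1))
      = coeff i F * (if i = N then 1 else 0) := by
    intro i hi
    rw [Finset.mem_range] at hi
    rw [smul_mul_assoc, smul_mul_assoc, map_smul, smul_eq_mul,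
      mono w hw N i (by omega)]
  rw [Finset.sum_congr rfl hterm]
  simp only [mul_ite, mul_one, mul_zero]
  rw [Finset.sum_ite_eq' (Finset.range (N+1)) N (fun i => coeff i F),
    if_pos (Finset.self_mem_range_succ N)]


lemma f1_eq_range (N : ℕ) :
    f1 N = ∑ k ∈ Finset.range (N+1), (3*N+1).choose (N-k) * (N+k).choose N := by
  rw [f1, ← Finset.Ico_add_one_right_eq_Icc, Finset.sum_Ico_eq_sum_range]
  have h1 : 2*N + 1 - N = N + 1 := by omega
  rw [h1]
  refine Finset.sum_congr rfl fun k hk => ?_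
  rw [Finset.mem_range] at hk
  congr 1
  have h3 : N - k = 3*N+1 - (N + (N + k) + 1) := by omega
  rw [h3, Nat.choose_symm (by omega)]

lemma f1_eq_range' (N : ℕ) :
    f1 N = ∑ k ∈ Finset.range (N+1), (3*N+1).choose k * (N + (N-k)).choose N := by
  rw [f1_eq_range, ← Finset.sum_range_reflect]
  refine Finset.sum_congr rfl fun k hk => ?_
  rw [Finset.mem_range] at hk
  congr 2 <;> omega

lemma one_sub_inv : ((1 - X : ℚ⟦X⟧))⁻¹ = PowerSeries.mk 1 := by
  rw [eq_comm, PowerSeries.eq_inv_iff_mul_eq_one]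
  · exact mk_one_mul_one_sub_eq_one ℚ
  · simp

lemma coeff_one_add_X_pow (n j : ℕ) :
    coeff j ((1 + X : ℚ⟦X⟧) ^ n) = (n.choose j : ℚ) := by
  have hcoe : ((1 + X : ℚ⟦X⟧)) = ((Polynomial.X + 1 : Polynomial ℚ) : ℚ⟦X⟧) := by
    rw [Polynomial.coe_add, Polynomial.coe_one, Polynomial.coe_X, add_comm]
  rw [hcoe, ← Polynomial.coe_pow, Polynomial.coeff_coe, Polynomial.coeff_X_add_one_pow]

lemma coeffF_eq_f1 (N : ℕ) :
    coeff N ((((1 - X) * (1 - PowerSeries.C 2 * X) : ℚ⟦X⟧))⁻¹^(N+1)) = (f1 N : ℚ) := by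
  have hX1 : constantCoeff (1 + X : ℚ⟦X⟧) = 1 := by simp
  have hX10 : constantCoeff (1 + X : ℚ⟦X⟧) ≠ 0 := by rw [hX1]; norm_num
  set w : ℚ⟦X⟧ := (1 + X)⁻¹ with hwdef
  have h1X : (1 + X) * w = 1 := PowerSeries.mul_inv_cancel _ hX10
  have hw : constantCoeff w = 1 := by
    rw [hwdef, PowerSeries.constantCoeff_inv, hX1]; norm_num
  have hw0 : constantCoeff w ≠ 0 := by rw [hw]; norm_num
  have hwinv : w⁻¹ = 1 + X := by
    rw [eq_comm, PowerSeries.eq_inv_iff_mul_eq_one hw0]; exact h1X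
  have hM := master w hw N
  have h2C : (PowerSeries.C 2) = (2 : ℚ⟦X⟧) := by
    simp only [map_ofNat]
  have hA : 1 - X * w = w := by linear_combination -h1X
  have hB : 1 - PowerSeries.C 2 * (X * w) = (1 - X) * w := by
    rw [h2C]; linear_combination -h1X
  have hwsq : w = (1 + X) * w^2 := by rw [pow_two, ← mul_assoc, h1X, one_mul]
  have hD2 : d⁄dX ℚ (X * w) = w^2 := by
    rw [Derivation.leibniz]
    simp only [smul_eq_mul, PowerSeries.derivative_X, mul_one]
    rw [hwdef, PowerSeries.derivative_inv']
    rw [← hwdef]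
    have hD1X : d⁄dX ℚ (1 + X : ℚ⟦X⟧) = 1 := by
      rw [map_add, PowerSeries.derivative_X]; simp
    rw [hD1X]
    linear_combination hwsq
  have huinv : ((w * ((1 - X) * w)))⁻¹ = (1 - X)⁻¹ * (1 + X)^2 := by
    rw [eq_comm, PowerSeries.eq_inv_iff_mul_eq_one]
    · have e1 : ((1 - X : ℚ⟦X⟧))⁻¹ * (1 - X) = 1 := by
        apply PowerSeries.inv_mul_cancel
        simp
      calc (1 - X : ℚ⟦X⟧)⁻¹ * (1 + X)^2 * (w * ((1 - X) * w))
          = ((1 - X)⁻¹ * (1 - X)) * ((1 + X) * w)^2 := by ring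
        _ = 1 := by rw [e1, h1X]; norm_num
    · simp [hw]
  rw [hA, hB, hD2, hwinv, show w * ((1-X) * w) = w * ((1-X)*w) from rfl] at hM
  rw [huinv] at hM
  -- now simplify LHS of hM to coeff_N ((1-X)⁻¹^(N+1) * (1+X)^(3N+1))
  have hgen : ∀ a b c : ℚ⟦X⟧, (a * b^2)^(N+1) * c^2 * b^(N+1)
      = a^(N+1) * b^(3*N+1) * (b*c)^2 := by
    intro a b c; ring
  have hsimp : ((1 - X : ℚ⟦X⟧)⁻¹ * (1 + X)^2)^(N+1) * w^2 * (1+X)^(N+1)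
      = ((1-X)⁻¹)^(N+1) * (1+X)^(3*N+1) * ((1+X)*w)^2 :=
    hgen _ _ _
  rw [hsimp, h1X, one_pow, mul_one] at hM
  rw [← hM]
  -- coefficient computation
  rw [one_sub_inv, mk_one_pow_eq_mk_choose_add, mul_comm, coeff_mul]
  rw [Finset.Nat.sum_antidiagonal_eq_sum_range_succ
    (fun p q => coeff p ((1+X:ℚ⟦X⟧)^(3*N+1)) * coeff q (PowerSeries.mk fun n => (Nat.choose (N+n) N : ℚ)))]
  rw [f1_eq_range']
  push_cast
  refine Finset.sum_congr rfl fun k hk => ?_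
  rw [coeff_one_add_X_pow, coeff_mk]


end F1Dev

theorem f1_generating_function (α : PowerSeries ℚ)
    (h0 : PowerSeries.constantCoeff α = 0)
    (hα : α * (1 - α) * (1 - 2 * α) = PowerSeries.X) :
    (1 - 6 * α + 6 * α ^ 2) * PowerSeries.mk (fun n => (f1 n : ℚ)) = 1 := by
  obtain ⟨w, hwα⟩ : (X : ℚ⟦X⟧) ∣ α := PowerSeries.X_dvd_iff.mpr h0
  have hXne : (X : ℚ⟦X⟧) ≠ 0 := PowerSeries.X_ne_zero
  have hw1 : w * ((1 - α) * (1 - 2*α)) = 1 := by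
    apply mul_left_cancel₀ hXne
    rw [mul_one]
    linear_combination hα - ((1-α)*(1-2*α)) * hwα
  have hw : constantCoeff w = 1 := by
    have := congrArg (constantCoeff) hw1
    simpa [h0] using this
  have hw0 : constantCoeff w ≠ 0 := by rw [hw]; norm_num
  have hu0 : constantCoeff ((1 - α) * (1 - 2*α)) ≠ 0 := by
    simp [h0]
  have h2C : (PowerSeries.C 2) = (2 : ℚ⟦X⟧) := by simp only [map_ofNat]
  have huw : w = ((1 - α) * (1 - 2*α))⁻¹ := by
    rw [PowerSeries.eq_inv_iff_mul_eq_one hu0]; exact hw1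
  have hww : w * w⁻¹ = 1 := PowerSeries.mul_inv_cancel w hw0
  -- coefficientwise: coeff N (derivative α) = f1 N
  have hcoeff : ∀ N : ℕ, coeff N (d⁄dX ℚ α) = (f1 N : ℚ) := by
    intro N
    have hM := F1Dev.master w hw N
    rw [← hwα, h2C, ← huw] at hM
    have hre : w^(N+1) * (d⁄dX ℚ α) * (w⁻¹)^(N+1) = (w*w⁻¹)^(N+1) * d⁄dX ℚ α := by
      ring
    rw [hre, hww, one_pow, one_mul] at hM
    rw [hM]
    exact F1Dev.coeffF_eq_f1 N
  have hmk : PowerSeries.mk (fun n => (f1 n : ℚ)) = d⁄dX ℚ α := by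
    ext N
    rw [coeff_mk, hcoeff]
  rw [hmk]
  -- chain rule
  have heq : α - (α^2 + α^2 + α^2) + (α^3 + α^3) = X := by linear_combination hα
  have hD := congrArg (d⁄dX ℚ) heq
  simp only [map_sub, map_add, Derivation.leibniz_pow, PowerSeries.derivative_X,
    smul_eq_mul, nsmul_eq_mul] at hD
  push_cast at hD
  linear_combination hD

end
end
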